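/- arXiv:1501.03410 — 7 statements merged into one kernel-verified Lean document; each statement's English description precedes it below -/
import Mathlib

section
/- (Merson's Lemma) Let (G, γ) be a (not necessarily Hausdorff) topological group and H a (not necessarily closed) subgroup of G. If γ₁ ⊆ γ is a coarser group topology on G such that γ₁ and γ induce the same subspace topology on H and the same quotient topology on the coset space G/H, then γ₁ = γ. -/
open Pointwise Topology

private lemma merson_mem_nhds {G : Type*} (t : TopologicalSpace G) {s : Set G} {x : G}
    (hs : IsOpen[t] s) (hx : x ∈ s) : s ∈ @nhds G t x := by
  letI := t; exact hs.mem_nhds hx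


/-- **Merson's Lemma.** Let `γ` be a (not necessarily Hausdorff) group topology on `G` and `H`
a subgroup.  If `γ₁` is a coarser group topology (`γ ≤ γ₁` in Mathlib's order, where smaller
means finer) inducing the same subspace topology on `H` and the same quotient topology on the
left coset space `G ⧸ H`, then `γ₁ = γ`. -/
theorem merson_lemma {G : Type*} [Group G] (γ γ₁ : TopologicalSpace G)
    (hγ : @IsTopologicalGroup G γ _) (hγ₁ : @IsTopologicalGroup G γ₁ _)
    (hle : γ ≤ γ₁) (H : Subgroup G)
    (hsub : TopologicalSpace.induced ((↑) : H → G) γ₁ =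
      TopologicalSpace.induced ((↑) : H → G) γ)
    (hquot : TopologicalSpace.coinduced (QuotientGroup.mk : G → G ⧸ H) γ₁ =
      TopologicalSpace.coinduced (QuotientGroup.mk : G → G ⧸ H) γ) :
    γ₁ = γ := by
  refine IsTopologicalGroup.ext hγ₁ hγ (le_antisymm ?_ (nhds_mono hle))
  intro U hU
  -- pick a γ-open V ∋ 1 with V * V ⊆ U
  obtain ⟨V, Vopen, V1, hVV⟩ :=
    @exists_open_nhds_one_mul_subset G γ _ hγ.toContinuousMul U hU
  -- subspace hypothesis: a γ₁-open W₀ with W₀ ∩ H = V ∩ H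
  have hVind : @IsOpen H (TopologicalSpace.induced ((↑) : H → G) γ₁)
      (((↑) : H → G) ⁻¹' V) := by
    rw [hsub]; exact ⟨V, Vopen, rfl⟩
  obtain ⟨W₀, W₀open, hW₀⟩ := hVind
  have hW₀1 : (1 : G) ∈ W₀ := by
    have : ((1 : H) : G) ∈ V := V1
    have := (Set.ext_iff.mp hW₀ (1 : H)).mpr this
    simpa using this
  -- pick a γ₁-open W' ∋ 1 with W' * W' ⊆ W₀
  obtain ⟨W', W'open, W'1, hW'⟩ :=
    @exists_open_nhds_one_mul_subset G γ₁ _ hγ₁.toContinuousMul W₀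
      (merson_mem_nhds γ₁ W₀open hW₀1)
  -- V' := V ∩ W'⁻¹ is γ-open
  have W'inv_open : @IsOpen G γ₁ (W'⁻¹) :=
    @IsOpen.inv G γ₁ _ hγ₁.toContinuousInv W' W'open
  set V' : Set G := V ∩ W'⁻¹ with hV'
  have V'open : @IsOpen G γ V' := @IsOpen.inter G γ V W'⁻¹ Vopen (hle _ W'inv_open)
  have V'1 : (1 : G) ∈ V' := ⟨V1, by simpa using W'1⟩
  -- quotient hypothesis: V' * H is γ₁-open
  have hsat : (QuotientGroup.mk : G → G ⧸ H) ⁻¹'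
      ((QuotientGroup.mk : G → G ⧸ H) '' V') = V' * (H : Set G) :=
    QuotientGroup.preimage_image_mk_eq_mul H V'
  have hcoind : @IsOpen (G ⧸ H) (TopologicalSpace.coinduced (QuotientGroup.mk : G → G ⧸ H) γ)
      ((QuotientGroup.mk : G → G ⧸ H) '' V') := by
    rw [isOpen_coinduced, hsat]
    letI := γ
    exact V'open.mul_right
  have hVH : @IsOpen G γ₁ (V' * (H : Set G)) := by
    rw [← hsat, ← isOpen_coinduced (t := γ₁)]
    rw [hquot]
    exact hcoind
  -- the γ₁-neighbourhood O := W' ∩ (V' * H) of 1 is contained in U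
  refine Filter.mem_of_superset
    (merson_mem_nhds γ₁ (W'open.inter hVH)
      ⟨W'1, by simpa using Set.mul_mem_mul V'1 H.one_mem⟩) ?_
  rintro x ⟨hxW', v, hv, h, hh, rfl⟩
  -- h = v⁻¹ * (v * h) ∈ W' * W' ⊆ W₀, and h ∈ H, so h ∈ V
  have hvinv : v⁻¹ ∈ W' := hv.2
  have hmem : h ∈ W₀ := by
    have : v⁻¹ * (v * h) ∈ W₀ := hW' (Set.mul_mem_mul hvinv hxW')
    simpa using this
  have hVh : h ∈ V := by
    have := (Set.ext_iff.mp hW₀ ⟨h, hh⟩).mp hmem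
    simpa using this
  exact hVV (Set.mul_mem_mul hv.1 hVh)
end

section
/- Let H be a subgroup of a Hausdorff topological group G such that H is complete (in its two-sided uniformity), the coset space G/H is compact, and H is minimal as a topological group. Then G is minimal. -/
/-- The two-sided (Raikov) uniformity of a topological group: the supremum of the right
uniformity and the left uniformity (the latter being the pullback of the right uniformity
under inversion). -/
noncomputable def twoSidedUniformity (G : Type*) [Group G] [TopologicalSpace G]
    [IsTopologicalGroup G] : UniformSpace G :=
  IsTopologicalGroup.rightUniformSpace G ⊔
    UniformSpace.comap (fun x : G => x⁻¹) (IsTopologicalGroup.rightUniformSpace G)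

/-- A topological group is minimal if it admits no strictly coarser Hausdorff group topology. -/
def IsMinimalTopGroup (G : Type*) [Group G] (τ : TopologicalSpace G) : Prop :=
  ∀ t : TopologicalSpace G, @T2Space G t → @IsTopologicalGroup G t _ → τ ≤ t → t = τ


open Filter Topology Set
open scoped Uniformity

section Roelcke
variable (G : Type*) [Group G] [TopologicalSpace G] [IsTopologicalGroup G]

/-- Basic entourages of the Roelcke (lower) uniformity. -/
def roelckeEnt (V : Set G) : Set (G × G) := {p | ∃ v ∈ V, ∃ w ∈ V, p.2 = v * p.1 * w}

variable {G}

omit [TopologicalSpace G] [IsTopologicalGroup G] in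
lemma roelckeEnt_mono : Monotone (roelckeEnt G) := by
  rintro V W h p ⟨v, hv, w, hw, hp⟩
  exact ⟨v, h hv, w, h hw, hp⟩

lemma roelcke_hasBasis :
    ((𝓝 (1 : G)).lift' (roelckeEnt G)).HasBasis (· ∈ 𝓝 (1 : G)) (roelckeEnt G) :=
  (𝓝 (1 : G)).basis_sets.lift' roelckeEnt_mono

variable (G)

/-- The Roelcke (lower) uniformity of a topological group. -/
noncomputable def roelckeUniformity : UniformSpace G where
  uniformity := (𝓝 (1 : G)).lift' (roelckeEnt G)
  symm := by
    rw [roelcke_hasBasis.tendsto_iff roelcke_hasBasis]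
    intro V hV
    refine ⟨V⁻¹, (continuous_inv.tendsto' (1 : G) 1 inv_one) hV, ?_⟩
    rintro ⟨a, b⟩ ⟨v, hv, w, hw, h⟩
    refine ⟨v⁻¹, Set.mem_inv.mp hv, w⁻¹, Set.mem_inv.mp hw, ?_⟩
    simp only [Prod.snd_swap, Prod.fst_swap]
    rw [show b = v * a * w from h]; group
  comp := by
    rw [roelcke_hasBasis.ge_iff]
    intro V hV
    obtain ⟨V', hV', hmul⟩ := exists_nhds_one_split hV
    refine mem_of_superset (mem_lift' (roelcke_hasBasis.mem_of_mem hV')) ?_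
    rintro ⟨a, c⟩ ⟨b, ⟨v, hv, w, hw, hb⟩, ⟨v', hv', w', hw', hc⟩⟩
    refine ⟨v' * v, hmul _ hv' _ hv, w * w', hmul _ hw _ hw', ?_⟩
    show c = (v' * v) * a * (w * w')
    rw [show c = v' * b * w' from hc, show b = v * a * w from hb]; group
  nhds_eq_comap_uniformity := by
    intro x
    refine le_antisymm ?_ ?_
    · intro s hs
      obtain ⟨V, hV, hsub⟩ := (roelcke_hasBasis.comap (Prod.mk x)).mem_iff.1 hs
      rw [← map_mul_left_nhds_one]
      refine mem_map.2 (mem_of_superset hV ?_)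
      intro w hw
      exact hsub ⟨(1 : G), mem_of_mem_nhds hV, w, hw, by group⟩
    · intro s hs
      have hcont : Continuous (fun p : G × G => p.1 * x * p.2) := by continuity
      have hc : Tendsto (fun p : G × G => p.1 * x * p.2) (𝓝 1 ×ˢ 𝓝 1) (𝓝 x) := by
        have h2 := hcont.tendsto' ((1 : G), (1 : G)) x (by simp)
        rwa [nhds_prod_eq] at h2
      obtain ⟨V₁, hV₁, V₂, hV₂, hsub⟩ := mem_prod_iff.1 (hc hs)
      refine (roelcke_hasBasis.comap (Prod.mk x)).mem_iff.2
        ⟨V₁ ∩ V₂, inter_mem hV₁ hV₂, ?_⟩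
      rintro y ⟨v, hv, w, hw, hy⟩
      rw [show y = v * x * w from hy]
      exact hsub (Set.mk_mem_prod hv.1 hw.2)
  toTopologicalSpace := ‹TopologicalSpace G›

lemma toUniformSpace_le_roelcke :
    IsTopologicalGroup.rightUniformSpace G ≤ roelckeUniformity G := by
  intro s hs
  obtain ⟨V, hV, hsub⟩ := roelcke_hasBasis.mem_iff.1 hs
  refine Filter.mem_of_superset (Filter.preimage_mem_comap hV) ?_
  rintro ⟨a, b⟩ (h : b * a⁻¹ ∈ V)
  exact hsub ⟨b * a⁻¹, h, 1, mem_of_mem_nhds hV, by simp [div_eq_mul_inv, mul_assoc]⟩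

lemma comap_inv_le_roelcke :
    UniformSpace.comap (fun x : G => x⁻¹) (IsTopologicalGroup.rightUniformSpace G) ≤
      roelckeUniformity G := by
  intro s hs
  obtain ⟨V, hV, hsub⟩ := roelcke_hasBasis.mem_iff.1 hs
  have hV' : V⁻¹ ∈ 𝓝 (1 : G) := (continuous_inv.tendsto' (1 : G) 1 inv_one) hV
  refine Filter.mem_of_superset (Filter.preimage_mem_comap (Filter.preimage_mem_comap hV')) ?_
  rintro ⟨a, b⟩ (h : b⁻¹ * a⁻¹⁻¹ ∈ V⁻¹)
  refine hsub ⟨1, mem_of_mem_nhds hV, a⁻¹ * b, ?_, by group⟩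
  have : (b⁻¹ * a⁻¹⁻¹)⁻¹ ∈ V := Set.mem_inv.mp h
  simpa [div_eq_mul_inv, mul_inv_rev] using this

lemma twoSidedUniformity_le_roelcke : twoSidedUniformity G ≤ roelckeUniformity G :=
  sup_le (toUniformSpace_le_roelcke G) (comap_inv_le_roelcke G)

lemma twoSided_toTop :
    (twoSidedUniformity G).toTopologicalSpace = ‹TopologicalSpace G› :=
  le_antisymm
    (UniformSpace.toTopologicalSpace_mono (twoSidedUniformity_le_roelcke G))
    (UniformSpace.toTopologicalSpace_mono
      (le_sup_left : IsTopologicalGroup.rightUniformSpace G ≤ twoSidedUniformity G))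

end Roelcke

lemma twoSided_congr {H : Type*} [Group H] {t₁ t₂ : TopologicalSpace H}
    (h : t₁ = t₂) (g₁ : @IsTopologicalGroup H t₁ _) (g₂ : @IsTopologicalGroup H t₂ _) :
    @twoSidedUniformity H _ t₁ g₁ = @twoSidedUniformity H _ t₂ g₂ := by
  subst h; rfl

lemma aux_closed {G : Type*} [Group G] [TopologicalSpace G] [IsTopologicalGroup G] [T2Space G]
    (H : Subgroup G) (hc : @CompleteSpace H (twoSidedUniformity H)) :
    IsClosed (H : Set G) := by
  refine isClosed_of_closure_subset ?_
  intro x hx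
  set F₀ : Filter G := 𝓝 x ⊓ 𝓟 (H : Set G) with hF₀def
  have hF₀ : F₀.NeBot := mem_closure_iff_clusterPt.mp hx
  set F : Filter H := Filter.comap Subtype.val F₀ with hFdef
  have hF : F.NeBot := by
    refine Filter.comap_neBot fun s hs => ?_
    have h1 : s ∩ (H : Set G) ∈ F₀ :=
      inter_mem hs (mem_inf_of_right (mem_principal_self _))
    obtain ⟨a, ha, haH⟩ := hF₀.nonempty_of_mem h1
    exact ⟨⟨a, haH⟩, ha⟩
  have hval : Tendsto (Subtype.val : H → G) F (𝓝 x) :=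
    tendsto_comap.mono_right inf_le_left
  have hcauchy : @Cauchy H (twoSidedUniformity H) F := by
    refine ⟨hF, ?_⟩
    refine le_trans ?_ (le_sup_left :
      IsTopologicalGroup.rightUniformSpace H ≤ twoSidedUniformity H)
    show F ×ˢ F ≤ Filter.comap (fun p : H × H => p.2 * p.1⁻¹) (𝓝 1)
    rw [← Filter.tendsto_iff_comap]
    have hn : (𝓝 (1 : H)) = Filter.comap Subtype.val (𝓝 (1 : G)) := by
      rw [nhds_induced]; rfl
    rw [hn, Filter.tendsto_comap_iff]
    have hdiv : Tendsto (fun q : G × G => q.2 / q.1) (𝓝 x ×ˢ 𝓝 x) (𝓝 1) := by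
      have hcont : Continuous (fun q : G × G => q.2 / q.1) := continuous_snd.div' continuous_fst
      have h2 := hcont.tendsto' (x, x) 1 (by simp)
      rwa [nhds_prod_eq] at h2
    have hcomp := hdiv.comp (hval.prodMap hval)
    exact hcomp.congr (fun p => by simp [div_eq_mul_inv])
  obtain ⟨h, hh⟩ := @CompleteSpace.complete H (twoSidedUniformity H) hc F hcauchy
  rw [show (twoSidedUniformity H).toTopologicalSpace = _ from twoSided_toTop H] at hh
  have hval2 : Tendsto (Subtype.val : H → G) F (𝓝 (h : G)) :=
    (continuous_subtype_val.tendsto h).mono_left hh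
  have hxh : x = (h : G) := tendsto_nhds_unique hval hval2
  rw [hxh]; exact h.2

lemma aux_t2_quot {G : Type*} [Group G] [TopologicalSpace G] [IsTopologicalGroup G]
    (H : Subgroup G) (hH : IsClosed (H : Set G)) : T2Space (G ⧸ H) := by
  rw [t2_iff_isClosed_diagonal]
  have hq := (QuotientGroup.isOpenQuotientMap_mk (N := H)).prodMap
    (QuotientGroup.isOpenQuotientMap_mk (N := H))
  rw [← hq.isQuotientMap.isClosed_preimage]
  have heq : (Prod.map (QuotientGroup.mk : G → G ⧸ H) QuotientGroup.mk) ⁻¹'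
      (Set.diagonal (G ⧸ H)) = (fun p : G × G => p.1⁻¹ * p.2) ⁻¹' (H : Set G) := by
    ext p
    simp only [Set.mem_preimage, Set.mem_diagonal_iff, Prod.map_fst, Prod.map_snd]
    exact QuotientGroup.eq
  rw [heq]
  exact hH.preimage (continuous_fst.inv.mul continuous_snd)

lemma aux_sub_t2 {G : Type*} [Group G] [TopologicalSpace G] [T2Space G]
    (H : Subgroup G) : T2Space H := inferInstance

lemma aux_sub_tg {G : Type*} [Group G] [TopologicalSpace G] [IsTopologicalGroup G]
    (H : Subgroup G) : IsTopologicalGroup H := inferInstance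

lemma aux_open_core {G : Type*} [TopologicalSpace G] {s : Set G} {x : G} (h : s ∈ 𝓝 x) :
    ∃ O ⊆ s, IsOpen O ∧ x ∈ O := mem_nhds_iff.1 h

lemma aux_closed_compact {X : Type*} [TopologicalSpace X] [CompactSpace X] {s : Set X}
    (h : IsClosed s) : IsCompact s := h.isCompact

lemma exists_nhds_one_split_inv {G : Type*} [Group G] [TopologicalSpace G] [IsTopologicalGroup G]
    {W : Set G} (hW : W ∈ 𝓝 (1 : G)) :
    ∃ W₁ ∈ 𝓝 (1 : G), ∀ a ∈ W₁, ∀ b ∈ W₁, a⁻¹ * b ∈ W := by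
  have hcont : Continuous (fun p : G × G => p.1⁻¹ * p.2) := continuous_fst.inv.mul continuous_snd
  have h2 := hcont.tendsto' ((1 : G), (1 : G)) 1 (by simp)
  rw [nhds_prod_eq] at h2
  obtain ⟨W₁, hW₁, W₂, hW₂, hsub⟩ := mem_prod_iff.1 (h2 hW)
  exact ⟨W₁ ∩ W₂, inter_mem hW₁ hW₂, fun a ha b hb => hsub (Set.mk_mem_prod ha.1 hb.2)⟩

/-- If `H` is a subgroup of a Hausdorff topological group `G` which is complete in its
two-sided uniformity, such that `G ⧸ H` is compact and `H` is minimal, then `G` is minimal. -/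
theorem minimal_of_cocompact_complete_minimal_subgroup {G : Type*} [Group G]
    [TopologicalSpace G] [IsTopologicalGroup G] [T2Space G] (H : Subgroup G)
    (hcomplete : @CompleteSpace H (twoSidedUniformity H))
    (hcocompact : CompactSpace (G ⧸ H))
    (hmin : IsMinimalTopGroup H inferInstance) :
    IsMinimalTopGroup G inferInstance := by
  rename_i gG tau taug tau2
  intro t ht2 htg hle
  -- Step 1: the topologies induced on H agree
  have htgH : @IsTopologicalGroup H (TopologicalSpace.induced Subtype.val t) _ :=
    @aux_sub_tg G _ t htg H
  have ht2H : @T2Space H (TopologicalSpace.induced Subtype.val t) :=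
    @aux_sub_t2 G _ t ht2 H
  have heqH := hmin (TopologicalSpace.induced Subtype.val t) ht2H htgH (induced_mono hle)
  -- Step 2: H is closed in (G, t)
  have hcH : @CompleteSpace H
      (@twoSidedUniformity H _ (TopologicalSpace.induced Subtype.val t) htgH) := by
    rw [twoSided_congr heqH htgH inferInstance]
    exact hcomplete
  have hclosed : @IsClosed G t (H : Set G) := @aux_closed G _ t htg ht2 H hcH
  -- Step 3: quotient topologies
  have hT2q : @T2Space (G ⧸ H) (@QuotientGroup.instTopologicalSpace G t _ H) :=
    @aux_t2_quot G _ t htg H hclosed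
  have hleq : (@QuotientGroup.instTopologicalSpace G tau _ H : TopologicalSpace (G ⧸ H)) ≤
      @QuotientGroup.instTopologicalSpace G t _ H := coinduced_mono hle
  have hle2 : ∀ U : Set (G ⧸ H), @IsOpen _ (@QuotientGroup.instTopologicalSpace G tau _ H) U →
      @IsOpen _ (@QuotientGroup.instTopologicalSpace G t _ H) U := by
    intro U hU
    have hC : @IsClosed _ (@QuotientGroup.instTopologicalSpace G tau _ H) Uᶜ :=
      (@isClosed_compl_iff _ (@QuotientGroup.instTopologicalSpace G tau _ H) U).mpr hU
    have hcomp : @IsCompact _ (@QuotientGroup.instTopologicalSpace G tau _ H) Uᶜ :=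
      @aux_closed_compact (G ⧸ H) (@QuotientGroup.instTopologicalSpace G tau _ H) hcocompact _ hC
    have hcomp2 : @IsCompact _ (@QuotientGroup.instTopologicalSpace G t _ H) Uᶜ := by
      have := @IsCompact.image _ _ (@QuotientGroup.instTopologicalSpace G tau _ H)
        (@QuotientGroup.instTopologicalSpace G t _ H) _ id hcomp (continuous_id_of_le hleq)
      simpa using this
    have hCc : @IsClosed _ (@QuotientGroup.instTopologicalSpace G t _ H) Uᶜ :=
      @IsCompact.isClosed (G ⧸ H) (@QuotientGroup.instTopologicalSpace G t _ H) hT2q Uᶜ hcomp2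
    exact (@isClosed_compl_iff _ (@QuotientGroup.instTopologicalSpace G t _ H) U).mp hCc
  -- Step 4: Merson's lemma
  have key : @nhds G t 1 ≤ @nhds G tau 1 := by
    intro U hU
    obtain ⟨V, hV, hVmul⟩ := @exists_nhds_one_split G tau _ taug.toContinuousMul U hU
    have h2 : @nhds H (TopologicalSpace.induced Subtype.val t) 1 =
        Filter.comap Subtype.val (@nhds G t 1) := by
      rw [nhds_induced]
      simp
    have hVH : (Subtype.val ⁻¹' V : Set H) ∈ Filter.comap Subtype.val (@nhds G t 1) := by
      rw [← h2, heqH]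
      show (Subtype.val ⁻¹' V : Set H) ∈ @nhds H (TopologicalSpace.induced Subtype.val tau) 1
      rw [@nhds_induced G H tau Subtype.val 1]
      exact preimage_mem_comap (by simpa using hV)
    obtain ⟨W, hW, hWsub⟩ := Filter.mem_comap.1 hVH
    obtain ⟨W₁, hW₁, hWi⟩ := @exists_nhds_one_split_inv G _ t htg W hW
    have hW₁tau : W₁ ∈ @nhds G tau 1 := nhds_mono hle hW₁
    have hV₂ : V ∩ W₁ ∈ @nhds G tau 1 := inter_mem hV hW₁tau
    obtain ⟨O, hOsub, hOopen, hO1⟩ := @aux_open_core G tau _ _ hV₂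
    have hOq : @IsOpen _ (@QuotientGroup.instTopologicalSpace G tau _ H)
        ((QuotientGroup.mk : G → G ⧸ H) '' O) :=
      @QuotientGroup.isOpenMap_coe G tau _ _ H O hOopen
    have hOq2 := hle2 _ hOq
    have hpre : @IsOpen _ t ((QuotientGroup.mk : G → G ⧸ H) ⁻¹' (QuotientGroup.mk '' O)) := by
      have hcmk : Continuous[t, @QuotientGroup.instTopologicalSpace G t _ H]
          (QuotientGroup.mk : G → G ⧸ H) := @QuotientGroup.continuous_mk G t _ H
      exact hcmk.isOpen_preimage _ hOq2
    have hmem : ((QuotientGroup.mk : G → G ⧸ H) ⁻¹' (QuotientGroup.mk '' O)) ∩ W₁ ∈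
        @nhds G t 1 := inter_mem (hpre.mem_nhds ⟨1, hO1, rfl⟩) hW₁
    refine Filter.mem_of_superset hmem ?_
    rintro g ⟨⟨a, haO, hag⟩, hgW₁⟩
    have hh : a⁻¹ * g ∈ H := QuotientGroup.eq.1 hag
    have hinV : a⁻¹ * g ∈ V :=
      hWsub (show (⟨a⁻¹ * g, hh⟩ : H) ∈ Subtype.val ⁻¹' W from hWi a (hOsub haO).2 g hgW₁)
    have hfin := hVmul a (hOsub haO).1 _ hinV
    simpa [mul_inv_cancel_left] using hfin
  exact IsTopologicalGroup.ext htg taug (le_antisymm key (nhds_mono hle))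
end

section
/- Let X be a compact linearly ordered topological space. Then the continuous order-preserving maps from X to [0,1] separate the points of X. -/
open Set

namespace NachbinProof

variable {X : Type*} [LinearOrder X]

/-- Pick a point strictly between `a` and `b` when possible. -/
noncomputable def mid (x y : X)
    (hD : ∀ a b : X, x ≤ a → b ≤ y → a < b → ∃ c, a < c ∧ c < b) (a b : X) : X :=
  if h : x ≤ a ∧ b ≤ y ∧ a < b then (hD a b h.1 h.2.1 h.2.2).choose else a

lemma mid_spec {x y : X} {hD : ∀ a b : X, x ≤ a → b ≤ y → a < b → ∃ c, a < c ∧ c < b}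
    {a b : X} (h1 : x ≤ a) (h2 : b ≤ y) (h3 : a < b) :
    a < mid x y hD a b ∧ mid x y hD a b < b := by
  rw [mid, dif_pos ⟨h1, h2, h3⟩]
  exact (hD a b h1 h2 h3).choose_spec

lemma mid_mem {x y : X} {hD : ∀ a b : X, x ≤ a → b ≤ y → a < b → ∃ c, a < c ∧ c < b}
    {a b : X} (hxa : x ≤ a) (hay : a ≤ y) (hby : b ≤ y) :
    x ≤ mid x y hD a b ∧ mid x y hD a b ≤ y := by
  rw [mid]
  split_ifs with h
  · have := (hD a b h.1 h.2.1 h.2.2).choose_spec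
    exact ⟨hxa.trans this.1.le, this.2.le.trans hby⟩
  · exact ⟨hxa, hay⟩

lemma mid_self {x y : X} {hD : ∀ a b : X, x ≤ a → b ≤ y → a < b → ∃ c, a < c ∧ c < b}
    (a : X) : mid x y hD a a = a := by
  rw [mid, dif_neg]
  rintro ⟨-, -, h⟩; exact lt_irrefl a h

/-- The dyadic grid: `g n k` is the point assigned to the dyadic rational `k / 2^n`. -/
noncomputable def g (x y : X)
    (hD : ∀ a b : X, x ≤ a → b ≤ y → a < b → ∃ c, a < c ∧ c < b) : ℕ → ℕ → X
  | 0, k => if k = 0 then x else y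
  | (n+1), k =>
      if k % 2 = 0 then g x y hD n (k / 2)
      else mid x y hD (g x y hD n (k / 2)) (g x y hD n (k / 2 + 1))

variable {x y : X} {hD : ∀ a b : X, x ≤ a → b ≤ y → a < b → ∃ c, a < c ∧ c < b}

lemma g_zero (n : ℕ) : g x y hD n 0 = x := by
  induction n with
  | zero => simp [g]
  | succ n ih => simp [g, ih]

lemma g_top : ∀ n k, 2 ^ n ≤ k → g x y hD n k = y := by
  intro n
  induction n with
  | zero =>
    intro k hk
    have : k ≠ 0 := by omega
    simp [g, this]
  | succ n ih =>
    intro k hk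
    have h1 : 2 ^ n ≤ k / 2 := by
      have : 2 ^ (n + 1) = 2 ^ n * 2 := by ring
      omega
    have h2 : 2 ^ n ≤ k / 2 + 1 := by omega
    rcases Nat.mod_two_eq_zero_or_one k with h | h
    · rw [g, if_pos h]; exact ih _ h1
    · rw [g, if_neg (by omega)]
      rw [ih _ h1, ih _ h2, mid_self]

lemma g_main (hxy : x < y) :
    ∀ n, (∀ k, x ≤ g x y hD n k ∧ g x y hD n k ≤ y) ∧
      (∀ k < 2 ^ n, g x y hD n k < g x y hD n (k + 1)) := by
  intro n
  induction n with
  | zero =>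
    constructor
    · intro k
      by_cases hk : k = 0 <;> simp [g, hk, hxy.le]
    · intro k hk
      have hk0 : k = 0 := by omega
      subst hk0
      simpa [g] using hxy
  | succ n ih =>
    obtain ⟨ihb, ihs⟩ := ih
    have hb : ∀ k, x ≤ g x y hD (n+1) k ∧ g x y hD (n+1) k ≤ y := by
      intro k
      rcases Nat.mod_two_eq_zero_or_one k with h | h
      · rw [g, if_pos h]; exact ihb _
      · rw [g, if_neg (by omega)]
        exact mid_mem (ihb _).1 (ihb _).2 (ihb _).2
    refine ⟨hb, ?_⟩
    intro k hk
    have hhalf : k / 2 < 2 ^ n := by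
      have : 2 ^ (n + 1) = 2 ^ n * 2 := by ring
      omega
    have hstep : g x y hD n (k / 2) < g x y hD n (k / 2 + 1) := ihs _ hhalf
    rcases Nat.mod_two_eq_zero_or_one k with h | h
    · -- k even : g (n+1) k = g n (k/2), g (n+1) (k+1) = mid _ _
      have h1 : (k + 1) % 2 = 1 := by omega
      have h2 : (k + 1) / 2 = k / 2 := by omega
      rw [g, if_pos h]
      conv_rhs => rw [g, if_neg (by omega), h2]
      exact (mid_spec (ihb _).1 (ihb _).2 hstep).1
    · -- k odd
      have h1 : (k + 1) % 2 = 0 := by omega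
      have h2 : (k + 1) / 2 = k / 2 + 1 := by omega
      rw [g, if_neg (by omega)]
      conv_rhs => rw [g, if_pos h1, h2]
      exact (mid_spec (ihb _).1 (ihb _).2 hstep).2

lemma g_mono_level (hxy : x < y) {n k k' : ℕ} (h : k ≤ k') :
    g x y hD n k ≤ g x y hD n k' := by
  induction k' with
  | zero =>
    have : k = 0 := by omega
    subst this; exact le_rfl
  | succ k' ih =>
    rcases Nat.lt_or_ge k (k' + 1) with h' | h'
    · have hk : k ≤ k' := by omega
      refine (ih hk).trans ?_
      by_cases hlt : k' < 2 ^ n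
      · exact ((g_main hxy n).2 _ hlt).le
      · rw [g_top n k' (by omega), g_top n (k'+1) (by omega)]
    · have : k = k' + 1 := by omega
      subst this; exact le_rfl

lemma g_strict_level (hxy : x < y) {n k k' : ℕ} (h : k < k') (h2 : k < 2 ^ n) :
    g x y hD n k < g x y hD n k' :=
  lt_of_lt_of_le ((g_main hxy n).2 _ h2) (g_mono_level hxy h)

lemma g_lift (n k : ℕ) : g x y hD (n + 1) (2 * k) = g x y hD n k := by
  rw [g, if_pos (by omega)]
  congr 1
  omega

lemma g_lift_pow (n k : ℕ) : ∀ m, g x y hD (n + m) (k * 2 ^ m) = g x y hD n k := by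
  intro m
  induction m with
  | zero => simp
  | succ m ih =>
    have h : k * 2 ^ (m + 1) = 2 * (k * 2 ^ m) := by ring
    rw [show n + (m + 1) = (n + m) + 1 from rfl, h, g_lift, ih]

lemma g_le (hxy : x < y) {n k m k' : ℕ} (h : (k : ℝ) / 2 ^ n ≤ (k' : ℝ) / 2 ^ m) :
    g x y hD n k ≤ g x y hD m k' := by
  have hnat : k * 2 ^ m ≤ k' * 2 ^ n := by
    have h2n : (0:ℝ) < 2 ^ n := by positivity
    have h2m : (0:ℝ) < 2 ^ m := by positivity
    have := (div_le_div_iff₀ h2n h2m).mp h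
    exact_mod_cast this
  calc g x y hD n k = g x y hD (n + m) (k * 2 ^ m) := (g_lift_pow n k m).symm
    _ ≤ g x y hD (n + m) (k' * 2 ^ n) := g_mono_level hxy hnat
    _ = g x y hD m k' := by rw [Nat.add_comm]; exact g_lift_pow m k' n


/-- Dyadic values below `z`. -/
def S (x y : X) (hD : ∀ a b : X, x ≤ a → b ≤ y → a < b → ∃ c, a < c ∧ c < b)
    (z : X) : Set ℝ :=
  insert 0 {r | ∃ n k : ℕ, k ≤ 2 ^ n ∧ g x y hD n k ≤ z ∧ r = (k : ℝ) / 2 ^ n}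

noncomputable def f (x y : X)
    (hD : ∀ a b : X, x ≤ a → b ≤ y → a < b → ∃ c, a < c ∧ c < b) (z : X) : ℝ :=
  sSup (S x y hD z)

lemma S_zero_mem (z : X) : (0 : ℝ) ∈ S x y hD z := mem_insert _ _

lemma S_ne (z : X) : (S x y hD z).Nonempty := ⟨0, S_zero_mem z⟩

lemma S_bdd (z : X) : BddAbove (S x y hD z) := by
  refine ⟨1, ?_⟩
  rintro r (rfl | ⟨n, k, hk, -, rfl⟩)
  · norm_num
  · rw [div_le_one (by positivity)]
    exact_mod_cast hk

lemma f_nonneg (z : X) : 0 ≤ f x y hD z := le_csSup (S_bdd z) (S_zero_mem z)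

lemma f_le_one (z : X) : f x y hD z ≤ 1 := by
  refine csSup_le (S_ne z) ?_
  rintro r (rfl | ⟨n, k, hk, -, rfl⟩)
  · norm_num
  · rw [div_le_one (by positivity)]
    exact_mod_cast hk

lemma f_mono : Monotone (f x y hD) := by
  intro z z' hzz
  refine csSup_le_csSup (S_bdd z') (S_ne z) ?_
  rintro r (rfl | ⟨n, k, hk, hg, rfl⟩)
  · exact S_zero_mem z'
  · exact Or.inr ⟨n, k, hk, hg.trans hzz, rfl⟩

lemma f_x (hxy : x < y) : f x y hD x = 0 := by
  refine le_antisymm (csSup_le (S_ne x) ?_) (f_nonneg x)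
  rintro r (rfl | ⟨n, k, hk, hg, rfl⟩)
  · exact le_rfl
  · rcases Nat.eq_zero_or_pos k with rfl | hkpos
    · simp
    · exfalso
      have : g x y hD n 0 < g x y hD n k :=
        g_strict_level hxy hkpos (by positivity)
      rw [g_zero] at this
      exact absurd (this.trans_le hg) (lt_irrefl x)

lemma f_y (hxy : x < y) : f x y hD y = 1 := by
  refine le_antisymm (f_le_one y) ?_
  have h1 : (1 : ℝ) ∈ S x y hD y := by
    refine Or.inr ⟨0, 1, by norm_num, ?_, by norm_num⟩
    simp [g]
  exact le_csSup (S_bdd y) h1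


section Topology

variable [TopologicalSpace X] [OrderTopology X]

lemma isOpen_lt_f (hxy : x < y) (a : ℝ) : IsOpen {z : X | a < f x y hD z} := by
  rcases lt_or_ge a 0 with ha | ha
  · have : {z : X | a < f x y hD z} = univ :=
      eq_univ_of_forall fun z => ha.trans_le (f_nonneg z)
    rw [this]; exact isOpen_univ
  · have hset : {z : X | a < f x y hD z} =
        ⋃ (n : ℕ) (k : ℕ) (_ : k ≤ 2 ^ n ∧ a < (k : ℝ) / 2 ^ n), Ioi (g x y hD n k) := by
      ext z
      simp only [mem_setOf_eq, mem_iUnion, mem_Ioi]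
      constructor
      · intro hz
        obtain ⟨r, hr, hra⟩ := exists_lt_of_lt_csSup (S_ne z) hz
        rcases hr with rfl | ⟨n, k, hk, hg, rfl⟩
        · exact absurd hra (not_lt.mpr ha)
        · have hkpos : 1 ≤ k := by
            rcases Nat.eq_zero_or_pos k with rfl | h
            · simp only [Nat.cast_zero, zero_div] at hra; linarith
            · exact h
          have hε : 0 < (k : ℝ) / 2 ^ n - a := by linarith
          obtain ⟨m, hm⟩ := exists_pow_lt_of_lt_one hε (by norm_num : (1 : ℝ) / 2 < 1)
          set N := n + m with hN
          set K := k * 2 ^ m with hK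
          have hK1 : 1 ≤ K := Nat.one_le_iff_ne_zero.mpr (by positivity)
          have hKle : K ≤ 2 ^ N := by
            rw [hN, pow_add]
            exact Nat.mul_le_mul_right _ hk
          have hKval : ((K : ℕ) : ℝ) / 2 ^ N = (k : ℝ) / 2 ^ n := by
            rw [hK, hN, pow_add]
            push_cast
            rw [div_eq_div_iff (by positivity) (by positivity)]
            ring
          have hsmall : (1 : ℝ) / 2 ^ N ≤ (1 / 2 : ℝ) ^ m := by
            rw [← one_div_pow]
            exact pow_le_pow_of_le_one (by norm_num) (by norm_num) (by omega)
          refine ⟨N, K - 1, ⟨by omega, ?_⟩, ?_⟩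
          · have hc : ((K - 1 : ℕ) : ℝ) = (K : ℝ) - 1 := by
              push_cast [Nat.cast_sub hK1]; ring
            rw [hc, sub_div, hKval]
            have : (1 : ℝ) / 2 ^ N < (k : ℝ) / 2 ^ n - a := lt_of_le_of_lt hsmall hm
            linarith
          · have hlt : g x y hD N (K - 1) < g x y hD N K :=
              g_strict_level hxy (by omega) (by omega)
            have hGK : g x y hD N K = g x y hD n k := g_lift_pow n k m
            exact lt_of_lt_of_le hlt (hGK ▸ hg)
      · rintro ⟨n, k, ⟨hk, hak⟩, hz⟩
        have hmem : (k : ℝ) / 2 ^ n ∈ S x y hD z := Or.inr ⟨n, k, hk, hz.le, rfl⟩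
        exact hak.trans_le (le_csSup (S_bdd z) hmem)
    rw [hset]
    exact isOpen_iUnion fun _ => isOpen_iUnion fun _ => isOpen_iUnion fun _ => isOpen_Ioi

lemma isOpen_f_lt (hxy : x < y) (a : ℝ) : IsOpen {z : X | f x y hD z < a} := by
  rcases le_or_gt a 1 with h1 | h1
  · have hset : {z : X | f x y hD z < a} =
        ⋃ (n : ℕ) (k : ℕ) (_ : k ≤ 2 ^ n ∧ (k : ℝ) / 2 ^ n < a), Iio (g x y hD n k) := by
      ext z
      simp only [mem_setOf_eq, mem_iUnion, mem_Iio]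
      constructor
      · intro hz
        have h0 : 0 ≤ f x y hD z := f_nonneg z
        have hε : 0 < a - f x y hD z := by linarith
        obtain ⟨m, hm⟩ := exists_pow_lt_of_lt_one hε (by norm_num : (1 : ℝ) / 2 < 1)
        set k := ⌊f x y hD z * 2 ^ m⌋₊ + 1 with hkdef
        have hfk : f x y hD z < (k : ℝ) / 2 ^ m := by
          rw [lt_div_iff₀ (by positivity)]
          have := Nat.lt_floor_add_one (f x y hD z * 2 ^ m)
          push_cast [hkdef]
          linarith
        have hsmall : (1 : ℝ) / 2 ^ m < a - f x y hD z := by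
          rwa [← one_div_pow]
        have h2m : (0 : ℝ) < 2 ^ m := by positivity
        have hka : (k : ℝ) / 2 ^ m < a := by
          have hfl : (↑⌊f x y hD z * 2 ^ m⌋₊ : ℝ) ≤ f x y hD z * 2 ^ m :=
            Nat.floor_le (by positivity)
          have hkle : (k : ℝ) ≤ f x y hD z * 2 ^ m + 1 := by push_cast [hkdef]; linarith
          rw [div_lt_iff₀ h2m]
          rw [div_lt_iff₀ h2m] at hsmall
          nlinarith
        have hk2 : k ≤ 2 ^ m := by
          have hklt : (k : ℝ) < (2 : ℝ) ^ m := by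
            have := hka.trans_le h1
            rw [div_lt_one h2m] at this
            exact this
          have : k < 2 ^ m := by exact_mod_cast hklt
          omega
        have hzg : z < g x y hD m k := by
          by_contra hcon
          push_neg at hcon
          have hmem : (k : ℝ) / 2 ^ m ∈ S x y hD z := Or.inr ⟨m, k, hk2, hcon, rfl⟩
          exact absurd (le_csSup (S_bdd z) hmem) (not_le.mpr hfk)
        exact ⟨m, k, ⟨hk2, hka⟩, hzg⟩
      · rintro ⟨n, k, ⟨hk, hka⟩, hz⟩
        have hle : f x y hD z ≤ (k : ℝ) / 2 ^ n := by
          refine csSup_le (S_ne z) ?_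
          rintro r (rfl | ⟨m', k', hk', hg, rfl⟩)
          · positivity
          · by_contra hcon
            push_neg at hcon
            exact absurd (g_le hxy hcon.le |>.trans hg) (not_le.mpr hz)
        exact hle.trans_lt hka
    rw [hset]
    exact isOpen_iUnion fun _ => isOpen_iUnion fun _ => isOpen_iUnion fun _ => isOpen_Iio
  · have : {z : X | f x y hD z < a} = univ :=
      eq_univ_of_forall fun z => lt_of_le_of_lt (f_le_one z) h1
    rw [this]; exact isOpen_univ

lemma f_continuous (hxy : x < y) : Continuous (f x y hD) := by
  rw [continuous_iff_continuousAt]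
  intro z
  rw [ContinuousAt, tendsto_order]
  constructor
  · intro a ha
    exact (isOpen_lt_f hxy a).mem_nhds ha
  · intro a ha
    exact (isOpen_f_lt hxy a).mem_nhds ha

/-- The dense case of Nachbin's separation. -/
lemma dense_case (x y : X) (hxy : x < y)
    (hD : ∀ a b : X, x ≤ a → b ≤ y → a < b → ∃ c, a < c ∧ c < b) :
    ∃ f : X → ℝ, Continuous f ∧ Monotone f ∧
      (∀ z, f z ∈ Set.Icc (0 : ℝ) 1) ∧ f x ≠ f y := by
  refine ⟨f x y hD, f_continuous hxy, f_mono, fun z => ⟨f_nonneg z, f_le_one z⟩, ?_⟩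
  rw [f_x hxy, f_y hxy]
  norm_num

/-- The gap case. -/
lemma gap_case (x y a b : X) (hxa : x ≤ a) (hby : b ≤ y) (hab : a < b)
    (hgap : ∀ c, ¬(a < c ∧ c < b)) :
    ∃ f : X → ℝ, Continuous f ∧ Monotone f ∧
      (∀ z, f z ∈ Set.Icc (0 : ℝ) 1) ∧ f x ≠ f y := by
  classical
  refine ⟨fun z => if z ≤ a then 0 else 1, ?_, ?_, ?_, ?_⟩
  · have hiic : Set.Iic a = Set.Iio b := by
      ext z
      constructor
      · intro hz; exact lt_of_le_of_lt hz hab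
      · intro hz
        by_contra hcon
        exact hgap z ⟨not_le.mp hcon, hz⟩
    have hclopen : IsClopen (Set.Iic a) := ⟨isClosed_Iic, hiic ▸ isOpen_Iio⟩
    refine Continuous.if ?_ continuous_const continuous_const
    intro w hw
    rw [show {x | x ≤ a} = Set.Iic a from rfl, hclopen.frontier_eq] at hw
    exact absurd hw (notMem_empty w)
  · intro u v huv
    dsimp only
    split_ifs with h1 h2 h2
    · exact le_rfl
    · norm_num
    · exact absurd (huv.trans h2) h1
    · exact le_rfl
  · intro z
    dsimp only
    split_ifs <;> norm_num
  · dsimp only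
    rw [if_pos hxa, if_neg (fun h => absurd (hby.trans h) (not_le.mpr hab))]
    norm_num

end Topology

end NachbinProof

/-- (Nachbin) On a compact linearly ordered topological space, the continuous
order-preserving maps into `[0,1]` separate points. -/
theorem exists_monotone_continuous_separating {X : Type*} [LinearOrder X]
    [TopologicalSpace X] [OrderTopology X] [CompactSpace X] :
    ∀ x y : X, x ≠ y → ∃ f : X → ℝ, Continuous f ∧ Monotone f ∧
      (∀ z, f z ∈ Set.Icc (0 : ℝ) 1) ∧ f x ≠ f y := by
  intro x y hxy
  wlog hlt : x < y generalizing x y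
  · obtain ⟨f, hc, hm, hb, hne⟩ := this y x hxy.symm (hxy.lt_or_gt.resolve_left hlt)
    exact ⟨f, hc, hm, hb, fun h => hne h.symm⟩
  by_cases hgap : ∃ a b : X, x ≤ a ∧ b ≤ y ∧ a < b ∧ ∀ c, ¬(a < c ∧ c < b)
  · obtain ⟨a, b, hxa, hby, hab, hg⟩ := hgap
    exact NachbinProof.gap_case x y a b hxa hby hab hg
  · push_neg at hgap
    refine NachbinProof.dense_case x y hlt ?_
    intro a b hxa hby hab
    exact hgap a b hxa hby hab
end

section
/- Let X be a compact linearly ordered topological space with minimum s, maximum t, and unique compatible uniformity μ. Then X is connected if and only if for every entourage α ∈ μ there exists a finite chain s = c₀ ≤ c₁ ≤ ⋯ ≤ cₙ = t such that (x,y) ∈ α for all x, y lying in the same interval [cᵢ, cᵢ₊₁]. -/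
open Filter Topology

/-- A compact LOTS `X` with minimum `s`, maximum `t` and (unique compatible) uniformity `𝓤 X`
is connected iff for every entourage `α` there is an `α`-connected net: a finite monotone
chain `s = c₀ ≤ c₁ ≤ ⋯ ≤ cₙ = t` such that any two points of a common interval
`[cᵢ, cᵢ₊₁]` are `α`-close. -/
theorem connected_iff_exists_connected_net {X : Type*} [UniformSpace X] [LinearOrder X]
    [OrderTopology X] [CompactSpace X] {s t : X}
    (hs : ∀ x, s ≤ x) (ht : ∀ x, x ≤ t) :
    ConnectedSpace X ↔
      ∀ α ∈ uniformity X, ∃ (n : ℕ) (c : Fin (n + 1) → X),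
        c 0 = s ∧ c (Fin.last n) = t ∧ Monotone c ∧
        ∀ i : Fin n, ∀ x y : X,
          x ∈ Set.Icc (c i.castSucc) (c i.succ) →
          y ∈ Set.Icc (c i.castSucc) (c i.succ) → (x, y) ∈ α := by
  constructor
  · -- Forward direction
    intro hconn α hα
    obtain ⟨β, hβ, hβsymm, hβα⟩ := comp_symm_mem_uniformity_sets hα
    -- the set of points reachable from `s` by an `α`-connected chain
    set P : X → Prop := fun z => ∃ (n : ℕ) (c : Fin (n + 1) → X),
        c 0 = s ∧ c (Fin.last n) = z ∧ Monotone c ∧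
        ∀ i : Fin n, ∀ x y : X,
          x ∈ Set.Icc (c i.castSucc) (c i.succ) →
          y ∈ Set.Icc (c i.castSucc) (c i.succ) → (x, y) ∈ α with hPdef
    have hPs : P s := ⟨0, fun _ => s, rfl, rfl, monotone_const, fun i => i.elim0⟩
    -- downward closure
    have down : ∀ x y : X, P x → y ≤ x → P y := by
      rintro x y ⟨n, c, h0, hl, hm, hsmall⟩ hyx
      refine ⟨n, fun j => min (c j) y, ?_, ?_, ?_, ?_⟩
      · simp only [h0]; exact min_eq_left (hs y)
      · simp only [hl]; exact min_eq_right hyx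
      · exact fun a b hab => min_le_min (hm hab) le_rfl
      · intro i p q hp hq
        rcases le_total y (c i.castSucc) with h | h
        · have hp' : p = y :=
            le_antisymm (hp.2.trans (min_le_right _ _)) ((le_min h le_rfl).trans hp.1)
          have hq' : q = y :=
            le_antisymm (hq.2.trans (min_le_right _ _)) ((le_min h le_rfl).trans hq.1)
          rw [hp', hq']
          exact refl_mem_uniformity hα
        · refine hsmall i p q ⟨(le_min le_rfl h).trans hp.1, hp.2.trans (min_le_left _ _)⟩
            ⟨(le_min le_rfl h).trans hq.1, hq.2.trans (min_le_left _ _)⟩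
    -- appending a small interval
    have append : ∀ x y : X, P x → x ≤ y →
        (∀ p q : X, p ∈ Set.Icc x y → q ∈ Set.Icc x y → (p, q) ∈ α) → P y := by
      rintro x y ⟨n, c, h0, hl, hm, hsmall⟩ hxy hsm
      refine ⟨n + 1, Fin.snoc c y, ?_, ?_, ?_, ?_⟩
      · have : (0 : Fin (n + 2)) = Fin.castSucc 0 := rfl
        rw [this, Fin.snoc_castSucc, h0]
      · rw [Fin.snoc_last]
      · rw [Fin.monotone_iff_le_succ]
        intro i
        induction i using Fin.lastCases with
        | last =>
          rw [Fin.succ_last, Fin.snoc_castSucc, Fin.snoc_last, hl]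
          exact hxy
        | cast j =>
          rw [Fin.succ_castSucc, Fin.snoc_castSucc, Fin.snoc_castSucc]
          exact hm (Fin.castSucc_le_succ j)
      · intro i
        induction i using Fin.lastCases with
        | last =>
          intro p q hp hq
          rw [Fin.succ_last, Fin.snoc_castSucc, Fin.snoc_last, hl] at hp hq
          exact hsm p q hp hq
        | cast j =>
          intro p q hp hq
          rw [Fin.succ_castSucc, Fin.snoc_castSucc, Fin.snoc_castSucc] at hp hq
          exact hsmall j p q hp hq
    -- convex β-small neighborhoods
    have nbhd : ∀ x : X, ∃ b c' : X, x ∈ Set.Icc b c' ∧ Set.Icc b c' ∈ 𝓝 x ∧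
        ∀ p q : X, p ∈ Set.Icc b c' → q ∈ Set.Icc b c' → (p, q) ∈ α := by
      intro x
      have hball : UniformSpace.ball x β ∈ 𝓝 x := UniformSpace.ball_mem_nhds x hβ
      obtain ⟨b, c', hx, hmem, hsub⟩ := exists_Icc_mem_subset_of_mem_nhds hball
      refine ⟨b, c', hx, hmem, fun p q hp hq => ?_⟩
      have hp' : (x, p) ∈ β := hsub hp
      have hq' : (x, q) ∈ β := hsub hq
      exact hβα (SetRel.prodMk_mem_comp (hβsymm.symm _ _ hp') hq')
    set S : Set X := {z | P z} with hSdef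
    have hopen : IsOpen S := by
      rw [isOpen_iff_mem_nhds]
      intro x hx
      obtain ⟨b, c', hxin, hmem, hsm⟩ := nbhd x
      refine mem_of_superset hmem fun y hy => ?_
      rcases le_total y x with h | h
      · exact down x y hx h
      · exact append x y hx h fun p q hp hq =>
          hsm p q ⟨hxin.1.trans hp.1, hp.2.trans hy.2⟩ ⟨hxin.1.trans hq.1, hq.2.trans hy.2⟩
    have hclosed : IsClosed S := by
      refine isClosed_of_closure_subset fun x hx => ?_
      obtain ⟨b, c', hxin, hmem, hsm⟩ := nbhd x
      obtain ⟨y, hyN, hyS⟩ := mem_closure_iff_nhds.mp hx _ hmem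
      rcases le_total x y with h | h
      · exact down y x hyS h
      · exact append y x hyS h fun p q hp hq =>
          hsm p q ⟨hyN.1.trans hp.1, hp.2.trans hxin.2⟩ ⟨hyN.1.trans hq.1, hq.2.trans hxin.2⟩
    have : S = Set.univ := IsClopen.eq_univ ⟨hclosed, hopen⟩ ⟨s, hPs⟩
    have hPt : t ∈ S := by rw [this]; trivial
    exact hPt
  · -- Backward direction
    intro h
    have key : ∀ u v : Set X, IsClosed u → IsClosed v → Set.univ ⊆ u ∪ v →
        Disjoint u v → s ∈ u → Set.univ ⊆ u := by
      intro u v hu hv hcov hdisj hsu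
      obtain ⟨V, hV, hVdisj⟩ := hdisj.exists_uniform_thickening hu.isCompact hv
      have sep : ∀ a ∈ u, ∀ b ∈ v, (a, b) ∉ V := by
        intro a ha b hb hab
        exact Set.disjoint_left.mp hVdisj
          (Set.mem_biUnion ha hab)
          (Set.mem_biUnion hb (refl_mem_uniformity hV))
      obtain ⟨n, c, h0, hl, hm, hsmall⟩ := h V hV
      have keyi : ∀ i : ℕ, ∀ hi : i ≤ n,
          Set.Icc s (c ⟨i, Nat.lt_succ_of_le hi⟩) ⊆ u := by
        intro i
        induction i with
        | zero =>
          intro hi x hx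
          have hc0 : c ⟨0, Nat.lt_succ_of_le hi⟩ = s := h0
          rw [hc0] at hx
          have : x = s := le_antisymm hx.2 hx.1
          rwa [this]
        | succ i ih =>
          intro hi
          have hi' : i ≤ n := Nat.le_of_succ_le hi
          set j : Fin n := ⟨i, hi⟩ with hj
          have hcast : j.castSucc = (⟨i, Nat.lt_succ_of_le hi'⟩ : Fin (n+1)) := rfl
          have hsucc : j.succ = (⟨i + 1, Nat.lt_succ_of_le hi⟩ : Fin (n+1)) := rfl
          have hprev := ih hi'
          have hcu : c j.castSucc ∈ u := by
            rw [hcast]; exact hprev ⟨hs _, le_rfl⟩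
          have hIu : Set.Icc (c j.castSucc) (c j.succ) ⊆ u := by
            by_contra hnot
            rw [Set.not_subset] at hnot
            obtain ⟨z, hz, hzu⟩ := hnot
            have hzv : z ∈ v := (hcov (Set.mem_univ z)).resolve_left hzu
            exact sep _ hcu _ hzv
              (hsmall j _ _ ⟨le_rfl, hm (Fin.castSucc_le_succ j)⟩ hz)
          intro x hx
          rcases le_total x (c j.castSucc) with hle | hge
          · exact hprev ⟨hx.1, hcast ▸ hle⟩
          · exact hIu ⟨hge, hsucc ▸ hx.2⟩
      have huniv : Set.univ ⊆ u := by
        intro x _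
        have hlast : (⟨n, Nat.lt_succ_of_le le_rfl⟩ : Fin (n+1)) = Fin.last n := rfl
        refine keyi n le_rfl ⟨hs x, ?_⟩
        rw [hlast, hl]
        exact ht x
      exact huniv
    have hpc : IsPreconnected (Set.univ : Set X) := by
      rw [isPreconnected_iff_subset_of_fully_disjoint_closed isClosed_univ]
      intro u v hu hv hcov hdisj
      rcases hcov (Set.mem_univ s) with hsu | hsv
      · exact Or.inl (key u v hu hv hcov hdisj hsu)
      · exact Or.inr (key v u hv hu (by rwa [Set.union_comm]) hdisj.symm hsv)
    exact { toNonempty := ⟨s⟩, isPreconnected_univ := hpc }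
end

section
/- Let X be a compact connected linearly ordered topological space such that for every pair a < b in X the group H₊([a,b]) of order-preserving homeomorphisms of [a,b] is nontrivial. Then for the topological group G = H₊(X) with the compact-open topology, the Zariski topology equals the compact-open topology; in particular the compact-open topology is the smallest Hausdorff group topology on G (G is a-minimal). -/
def zariskiSubbase (G : Type*) [Group G] : Set (Set G) :=
  {S | ∃ (n : ℕ) (ε : Fin n → Bool) (g : Fin n → G),
    S = {x : G | (List.ofFn (fun i : Fin n => (if ε i then x else x⁻¹) * g i)).prod ≠ 1}}

/-- The Zariski topology on a group. -/
def zariskiTopology (G : Type*) [Group G] : TopologicalSpace G :=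
  TopologicalSpace.generateFrom (zariskiSubbase G)

/-- The group of self-homeomorphisms (`f * g` acts by `g` then `f`). -/
instance homeoGroup {X : Type*} [TopologicalSpace X] : Group (X ≃ₜ X) where
  mul f g := g.trans f
  one := Homeomorph.refl X
  inv := Homeomorph.symm
  mul_assoc _ _ _ := rfl
  one_mul _ := Homeomorph.ext fun _ => rfl
  mul_one _ := Homeomorph.ext fun _ => rfl
  inv_mul_cancel f := Homeomorph.ext fun x => f.symm_apply_apply x

/-- The compact-open topology on the homeomorphism group, induced from `C(X, X)`. -/
instance homeoCompactOpen {X : Type*} [TopologicalSpace X] : TopologicalSpace (X ≃ₜ X) :=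
  TopologicalSpace.induced (fun f => (f : C(X, X))) ContinuousMap.compactOpen



set_option linter.unusedSectionVars false
set_option maxHeartbeats 1000000
open Set TopologicalSpace Topology


section ZarAux
variable {X : Type*} [LinearOrder X] [TopologicalSpace X] [OrderTopology X]

lemma hmul_apply (f g : X ≃ₜ X) (x : X) : (f * g) x = f (g x) := rfl
lemma hinv_apply (f : X ≃ₜ X) (x : X) : (f⁻¹) x = f.symm x := rfl
lemma hone_apply (x : X) : (1 : X ≃ₜ X) x = x := rfl

lemma hne_one_iff (f : X ≃ₜ X) : f ≠ 1 ↔ ∃ x, f x ≠ x := by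
  constructor
  · intro h; by_contra hc; push_neg at hc; exact h (Homeomorph.ext fun x => hc x)
  · rintro ⟨x, hx⟩ rfl; exact hx rfl

lemma symm_strictMono {f : X ≃ₜ X} (hf : Monotone ⇑f) : StrictMono ⇑f.symm := by
  intro a b hab
  by_contra hc
  push_neg at hc
  have := hf hc
  rw [f.apply_symm_apply, f.apply_symm_apply] at this
  exact absurd hab (not_lt.2 this)

lemma strictMono_of_monotone {f : X ≃ₜ X} (hf : Monotone ⇑f) : StrictMono ⇑f :=
  hf.strictMono_of_injective f.injective

lemma symm_fix {f : X ≃ₜ X} {x : X} (h : f x = x) : f.symm x = x := by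
  conv_lhs => rw [← h, f.symm_apply_apply]

lemma fix_mem {f : X ≃ₜ X} {S : Set X} (hf : ∀ x ∉ S, f x = x) {x : X} (hx : x ∈ S) :
    f x ∈ S := by
  by_contra h
  have h2 := hf _ h
  exact h ((f.injective h2).symm ▸ hx)

lemma supp_conj (f k : X ≃ₜ X) (S : Set X) (hk : ∀ x ∉ S, k x = x) :
    ∀ y ∉ f '' S, (f * k * f⁻¹) y = y := by
  intro y hy
  have h1 : f.symm y ∉ S := by
    intro h
    exact hy ⟨f.symm y, h, f.apply_symm_apply y⟩
  show f (k (f.symm y)) = y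
  rw [hk _ h1, f.apply_symm_apply]

lemma commute_of_disjoint (k h : X ≃ₜ X) (S T : Set X) (hk : ∀ x ∉ S, k x = x)
    (hh : ∀ x ∉ T, h x = x) (hST : ∀ x, x ∈ S → x ∉ T) : k * h = h * k := by
  apply Homeomorph.ext
  intro x
  show k (h x) = h (k x)
  by_cases hxS : x ∈ S
  · rw [hh _ (hST _ hxS), hh _ (hST _ (fix_mem hk hxS))]
  · by_cases hxT : x ∈ T
    · have hTx : h x ∈ T := fix_mem hh hxT
      have : h x ∉ S := fun hc => hST _ hc hTx
      rw [hk _ this, hk _ hxS]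
    · rw [hh _ hxT, hk _ hxS, hh _ hxT]

lemma denselyOrdered_of_connected [ConnectedSpace X] : DenselyOrdered X := by
  constructor
  intro a b hab
  by_contra h
  push_neg at h
  have hcompl : (Iio b)ᶜ = Ioi a := by
    ext x
    simp only [mem_compl_iff, mem_Iio, not_lt, mem_Ioi]
    exact ⟨fun hx => lt_of_lt_of_le hab hx, fun hx => h x hx⟩
  have hclopen : IsClopen (Iio b) := by
    refine ⟨?_, isOpen_Iio⟩
    rw [← isOpen_compl_iff, hcompl]
    exact isOpen_Ioi
  rcases isClopen_iff.1 hclopen with h1 | h1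
  · have : a ∈ Iio b := hab
    rw [h1] at this
    exact this
  · have : b ∈ Iio b := by rw [h1]; trivial
    exact lt_irrefl b this

lemma exists_forall_le [CompactSpace X] [Nonempty X] : ∃ m : X, ∀ x, m ≤ x := by
  obtain ⟨m, hm⟩ := (isCompact_univ : IsCompact (univ : Set X)).exists_isLeast univ_nonempty
  exact ⟨m, fun x => hm.2 (mem_univ x)⟩

lemma exists_forall_ge [CompactSpace X] [Nonempty X] : ∃ m : X, ∀ x, x ≤ m := by
  obtain ⟨m, hm⟩ := (isCompact_univ : IsCompact (univ : Set X)).exists_isGreatest univ_nonempty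
  exact ⟨m, fun x => hm.2 (mem_univ x)⟩

section Ext
variable {a b : X}

noncomputable def extFun (h : Set.Icc a b ≃ₜ Set.Icc a b) : X → X :=
  fun x => if hx : x ∈ Icc a b then (h ⟨x, hx⟩ : X) else x

lemma extFun_mem (h : Set.Icc a b ≃ₜ Set.Icc a b) {x : X} (hx : x ∈ Icc a b) :
    extFun h x = (h ⟨x, hx⟩ : X) := dif_pos hx

lemma extFun_not_mem (h : Set.Icc a b ≃ₜ Set.Icc a b) {x : X} (hx : x ∉ Icc a b) :
    extFun h x = x := dif_neg hx

lemma icc_strictMono (h : Set.Icc a b ≃ₜ Set.Icc a b) (hm : Monotone ⇑h) : StrictMono ⇑h :=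
  hm.strictMono_of_injective h.injective

lemma extFun_strictMono (h : Set.Icc a b ≃ₜ Set.Icc a b) (hm : Monotone ⇑h) :
    StrictMono (extFun h) := by
  have hsm := icc_strictMono h hm
  intro x y hxy
  by_cases hx : x ∈ Icc a b <;> by_cases hy : y ∈ Icc a b
  · rw [extFun_mem h hx, extFun_mem h hy]
    exact_mod_cast hsm (show (⟨x, hx⟩ : Icc a b) < ⟨y, hy⟩ from hxy)
  · have hay : a ≤ y := le_trans hx.1 (le_of_lt hxy)
    have hby : b < y := by
      rcases lt_or_ge b y with h' | h'
      · exact h'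
      · exact absurd ⟨hay, h'⟩ hy
    rw [extFun_mem h hx, extFun_not_mem h hy]
    exact lt_of_le_of_lt (h ⟨x, hx⟩).2.2 hby
  · have hxb : x ≤ b := le_trans (le_of_lt hxy) hy.2
    have hxa : x < a := by
      rcases lt_or_ge x a with h' | h'
      · exact h'
      · exact absurd ⟨h', hxb⟩ hx
    rw [extFun_not_mem h hx, extFun_mem h hy]
    exact lt_of_lt_of_le hxa (h ⟨y, hy⟩).2.1
  · rw [extFun_not_mem h hx, extFun_not_mem h hy]
    exact hxy

lemma extFun_surjective (h : Set.Icc a b ≃ₜ Set.Icc a b) : Function.Surjective (extFun h) := by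
  intro z
  by_cases hz : z ∈ Icc a b
  · refine ⟨(h.symm ⟨z, hz⟩ : X), ?_⟩
    rw [extFun_mem h (h.symm ⟨z, hz⟩).2]
    have : (⟨(h.symm ⟨z, hz⟩ : X), (h.symm ⟨z, hz⟩).2⟩ : Icc a b) = h.symm ⟨z, hz⟩ :=
      Subtype.ext rfl
    rw [this, h.apply_symm_apply]
  · exact ⟨z, extFun_not_mem h hz⟩

noncomputable def extHomeo (h : Set.Icc a b ≃ₜ Set.Icc a b) (hm : Monotone ⇑h) : X ≃ₜ X :=
  (StrictMono.orderIsoOfSurjective _ (extFun_strictMono h hm) (extFun_surjective h)).toHomeomorph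

lemma extHomeo_coe (h : Set.Icc a b ≃ₜ Set.Icc a b) (hm : Monotone ⇑h) :
    ⇑(extHomeo h hm) = extFun h := by
  rw [extHomeo, OrderIso.coe_toHomeomorph, StrictMono.coe_orderIsoOfSurjective]

lemma extHomeo_monotone (h : Set.Icc a b ≃ₜ Set.Icc a b) (hm : Monotone ⇑h) :
    Monotone ⇑(extHomeo h hm) := by
  rw [extHomeo_coe]
  exact (extFun_strictMono h hm).monotone

lemma extHomeo_fix (h : Set.Icc a b ≃ₜ Set.Icc a b) (hm : Monotone ⇑h) :
    ∀ x ∉ Icc a b, extHomeo h hm x = x := by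
  intro x hx
  rw [extHomeo_coe]
  exact extFun_not_mem h hx

lemma extHomeo_moved (h : Set.Icc a b ≃ₜ Set.Icc a b) (hm : Monotone ⇑h)
    (hne : h ≠ Homeomorph.refl (Set.Icc a b)) (hab : a ≤ b) :
    ∃ q, a < q ∧ q < b ∧ extHomeo h hm q ≠ q := by
  have hsm := icc_strictMono h hm
  obtain ⟨p, hp⟩ : ∃ p, h p ≠ p := by
    by_contra hc
    push_neg at hc
    exact hne (Homeomorph.ext fun p => hc p)
  have hbotfix : h ⟨a, left_mem_Icc.2 hab⟩ = ⟨a, left_mem_Icc.2 hab⟩ := by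
    have hle : (⟨a, left_mem_Icc.2 hab⟩ : Icc a b) ≤ h.symm ⟨a, left_mem_Icc.2 hab⟩ :=
      (h.symm ⟨a, left_mem_Icc.2 hab⟩).2.1
    have h1 : h ⟨a, left_mem_Icc.2 hab⟩ ≤ ⟨a, left_mem_Icc.2 hab⟩ := by
      have := hm hle
      rwa [h.apply_symm_apply] at this
    exact le_antisymm h1 (h ⟨a, left_mem_Icc.2 hab⟩).2.1
  have htopfix : h ⟨b, right_mem_Icc.2 hab⟩ = ⟨b, right_mem_Icc.2 hab⟩ := by
    have hle : h.symm ⟨b, right_mem_Icc.2 hab⟩ ≤ (⟨b, right_mem_Icc.2 hab⟩ : Icc a b) :=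
      (h.symm ⟨b, right_mem_Icc.2 hab⟩).2.2
    have h1 : (⟨b, right_mem_Icc.2 hab⟩ : Icc a b) ≤ h ⟨b, right_mem_Icc.2 hab⟩ := by
      have := hm hle
      rwa [h.apply_symm_apply] at this
    exact le_antisymm (h ⟨b, right_mem_Icc.2 hab⟩).2.2 h1
  refine ⟨(p : X), ?_, ?_, ?_⟩
  · rcases lt_or_eq_of_le p.2.1 with h' | h'
    · exact h'
    · exfalso; apply hp; rw [show p = ⟨a, left_mem_Icc.2 hab⟩ from Subtype.ext h'.symm, hbotfix]
  · rcases lt_or_eq_of_le p.2.2 with h' | h'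
    · exact h'
    · exfalso; apply hp; rw [show p = ⟨b, right_mem_Icc.2 hab⟩ from Subtype.ext h', htopfix]
  · rw [extHomeo_coe, extFun_mem h p.2]
    intro hc
    apply hp
    have hpe : (⟨(p : X), p.2⟩ : Icc a b) = p := Subtype.ext rfl
    rw [hpe] at hc
    exact Subtype.ext hc
end Ext

variable (hA : ∀ a b : X, a < b →
    ∃ h : Set.Icc a b ≃ₜ Set.Icc a b, Monotone ⇑h ∧ h ≠ Homeomorph.refl (Set.Icc a b))

include hA in
lemma exists_bump_up {u v : X} (huv : u < v) :
    ∃ k : X ≃ₜ X, Monotone ⇑k ∧ (∀ x ∉ Icc u v, k x = x) ∧ ∃ q, u < q ∧ q < v ∧ q < k q := by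
  obtain ⟨h, hm, hne⟩ := hA u v huv
  obtain ⟨q, h1, h2, h3⟩ := extHomeo_moved h hm hne huv.le
  rcases lt_or_gt_of_ne h3 with hlt | hgt
  · refine ⟨(extHomeo h hm).symm, (symm_strictMono (extHomeo_monotone h hm)).monotone,
      fun x hx => symm_fix (extHomeo_fix h hm x hx), q, h1, h2, ?_⟩
    have := symm_strictMono (extHomeo_monotone h hm) hlt
    rwa [(extHomeo h hm).symm_apply_apply] at this
  · exact ⟨extHomeo h hm, extHomeo_monotone h hm, extHomeo_fix h hm, q, h1, h2, hgt⟩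

include hA in
lemma exists_bump_down {u v : X} (huv : u < v) :
    ∃ k : X ≃ₜ X, Monotone ⇑k ∧ (∀ x ∉ Icc u v, k x = x) ∧ ∃ q, u < q ∧ q < v ∧ k q < q := by
  obtain ⟨h, hm, hne⟩ := hA u v huv
  obtain ⟨q, h1, h2, h3⟩ := extHomeo_moved h hm hne huv.le
  rcases lt_or_gt_of_ne h3 with hlt | hgt
  · exact ⟨extHomeo h hm, extHomeo_monotone h hm, extHomeo_fix h hm, q, h1, h2, hlt⟩
  · refine ⟨(extHomeo h hm).symm, (symm_strictMono (extHomeo_monotone h hm)).monotone,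
      fun x hx => symm_fix (extHomeo_fix h hm x hx), q, h1, h2, ?_⟩
    have := symm_strictMono (extHomeo_monotone h hm) hgt
    rwa [(extHomeo h hm).symm_apply_apply] at this

variable (H : Subgroup (X ≃ₜ X)) (hH : H.carrier = {f : X ≃ₜ X | Monotone ⇑f})

include hH in
lemma mem_H {f : X ≃ₜ X} (hf : Monotone ⇑f) : f ∈ H := by
  have : f ∈ H.carrier := by rw [hH]; exact hf
  exact this

include hH in
lemma mono_H (f : ↥H) : Monotone ⇑(f : X ≃ₜ X) := by
  have h2 : (f : X ≃ₜ X) ∈ H.carrier := f.2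
  rw [hH] at h2
  exact h2

end ZarAux

section Word
variable {X : Type*} [LinearOrder X] [TopologicalSpace X] [OrderTopology X]
  [CompactSpace X] [ConnectedSpace X]
variable (hA : ∀ a b : X, a < b →
    ∃ h : Set.Icc a b ≃ₜ Set.Icc a b, Monotone ⇑h ∧ h ≠ Homeomorph.refl (Set.Icc a b))
variable (H : Subgroup (X ≃ₜ X)) (hH : H.carrier = {f : X ≃ₜ X | Monotone ⇑f})

include hA hH in
lemma word_open_gt (x a : X) :
    IsOpen[zariskiTopology ↥H] {f : ↥H | a < (f : X ≃ₜ X) x} := by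
  haveI : DenselyOrdered X := denselyOrdered_of_connected
  rw [@isOpen_iff_forall_mem_open ↥H (zariskiTopology ↥H)]
  intro g₀ hg₀
  have hg₀' : a < (g₀ : X ≃ₜ X) x := hg₀
  have hG0m : Monotone ⇑(g₀ : X ≃ₜ X) := mono_H H hH g₀
  have hG0s : StrictMono ⇑(g₀ : X ≃ₜ X) := strictMono_of_monotone hG0m
  have hG0ss : StrictMono ⇑(g₀ : X ≃ₜ X).symm := symm_strictMono hG0m
  have hαx : (g₀ : X ≃ₜ X).symm a < x := by
    have := hG0ss hg₀'
    rwa [Homeomorph.symm_apply_apply] at this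
  obtain ⟨c, hc1, hc2⟩ := exists_between hαx
  obtain ⟨k, hkm, hkfix, q, hq1, hq2, hq3⟩ := exists_bump_up hA hc2
  have hks : StrictMono ⇑k := strictMono_of_monotone hkm
  have h1 : (g₀ : X ≃ₜ X) q < (g₀ : X ≃ₜ X) (k q) := hG0s hq3
  obtain ⟨u, hu1, hu2⟩ := exists_between h1
  obtain ⟨v, hv1, hv2⟩ := exists_between hu2
  obtain ⟨h, hhm, hhfix, s, hs1, hs2, hs3⟩ := exists_bump_up hA hv1
  set G0 : X ≃ₜ X := (g₀ : X ≃ₜ X) with hG0def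
  set K : ↥H := ⟨k, mem_H H hH hkm⟩ with hKdef
  set Hh : ↥H := ⟨h, mem_H H hH hhm⟩ with hHhdef
  have hword : ∀ f : ↥H, (List.ofFn (fun i : Fin 4 =>
      (if (![true, false, true, false] : Fin 4 → Bool) i then f else f⁻¹) *
      (![K, Hh, K⁻¹, Hh⁻¹] : Fin 4 → ↥H) i)).prod
      = f * K * f⁻¹ * Hh * (f * K⁻¹ * f⁻¹) * Hh⁻¹ := by
    intro f; simp [List.ofFn_succ, mul_assoc]
  refine ⟨{f : ↥H | (List.ofFn (fun i : Fin 4 =>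
      (if (![true, false, true, false] : Fin 4 → Bool) i then f else f⁻¹) *
      (![K, Hh, K⁻¹, Hh⁻¹] : Fin 4 → ↥H) i)).prod ≠ 1}, ?_, ?_, ?_⟩
  · intro f hf
    show a < (f : X ≃ₜ X) x
    by_contra hcon
    push_neg at hcon
    apply hf
    rw [hword f]
    have hfm : Monotone ⇑(f : X ≃ₜ X) := mono_H H hH f
    have hau : a < u := by
      have h3 : a < G0 q := by
        have h4 : G0 (G0.symm a) < G0 q := hG0s (lt_trans hc1 hq1)
        rwa [Homeomorph.apply_symm_apply] at h4
      exact lt_trans h3 hu1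
    have hdisj : ∀ y, y ∈ ⇑(f : X ≃ₜ X) '' (Icc c x) → y ∉ Icc u v := by
      rintro y ⟨z, hz, rfl⟩ hyuv
      have h2 : (f : X ≃ₜ X) z ≤ a := le_trans (hfm hz.2) hcon
      exact absurd (le_trans hyuv.1 h2) (not_le.2 hau)
    have hcomm : ((f : X ≃ₜ X) * k * (f : X ≃ₜ X)⁻¹) * h
        = h * ((f : X ≃ₜ X) * k * (f : X ≃ₜ X)⁻¹) :=
      commute_of_disjoint _ _ (⇑(f : X ≃ₜ X) '' Icc c x) (Icc u v)
        (supp_conj (f : X ≃ₜ X) k _ hkfix) hhfix hdisj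
    apply Subtype.ext
    show (f : X ≃ₜ X) * k * (f : X ≃ₜ X)⁻¹ * h * ((f : X ≃ₜ X) * k⁻¹ * (f : X ≃ₜ X)⁻¹) * h⁻¹ = 1
    have hshape : (f : X ≃ₜ X) * k * (f : X ≃ₜ X)⁻¹ * h * ((f : X ≃ₜ X) * k⁻¹ * (f : X ≃ₜ X)⁻¹) * h⁻¹
        = (((f : X ≃ₜ X) * k * (f : X ≃ₜ X)⁻¹) * h) * (h * ((f : X ≃ₜ X) * k * (f : X ≃ₜ X)⁻¹))⁻¹ := by
      group
    rw [hshape, hcomm, mul_inv_cancel]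
  · show IsOpen[generateFrom (zariskiSubbase ↥H)] _
    exact isOpen_generateFrom_of_mem ⟨4, ![true, false, true, false], ![K, Hh, K⁻¹, Hh⁻¹], rfl⟩
  · show (List.ofFn (fun i : Fin 4 =>
      (if (![true, false, true, false] : Fin 4 → Bool) i then g₀ else g₀⁻¹) *
      (![K, Hh, K⁻¹, Hh⁻¹] : Fin 4 → ↥H) i)).prod ≠ 1
    rw [hword g₀]
    intro hc
    have hc' : G0 * k * G0⁻¹ * h * (G0 * k⁻¹ * G0⁻¹) * h⁻¹ = 1 := Subtype.ext_iff.1 hc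
    have h2 : (G0 * k * G0⁻¹) * h * (G0 * k * G0⁻¹)⁻¹ * h⁻¹ = 1 := by
      rw [show (G0 * k * G0⁻¹)⁻¹ = G0 * k⁻¹ * G0⁻¹ by group]
      exact hc'
    have hAeq : (G0 * k * G0⁻¹) * h * (G0 * k * G0⁻¹)⁻¹ = h := mul_inv_eq_one.1 h2
    have hsnot : s ∉ ⇑(G0 * k * G0⁻¹) '' Icc u v := by
      rintro ⟨t, ht, hts⟩
      have hqt : q < G0.symm t := by
        have h5 : G0.symm (G0 q) < G0.symm t := hG0ss (lt_of_lt_of_le hu1 ht.1)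
        rwa [Homeomorph.symm_apply_apply] at h5
      have h4 : G0 (k q) < G0 (k (G0.symm t)) := hG0s (hks hqt)
      have h5 : (G0 * k * G0⁻¹) t = G0 (k (G0.symm t)) := rfl
      rw [h5] at hts
      have h6 : v < s := by rw [← hts]; exact lt_trans hv2 h4
      exact absurd h6 (not_lt.2 hs2.le)
    have heval : ((G0 * k * G0⁻¹) * h * (G0 * k * G0⁻¹)⁻¹) s = s :=
      supp_conj (G0 * k * G0⁻¹) h _ hhfix s hsnot
    rw [hAeq] at heval
    exact hs3.ne' heval

include hA hH in
lemma word_open_lt (x b : X) :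
    IsOpen[zariskiTopology ↥H] {f : ↥H | (f : X ≃ₜ X) x < b} := by
  haveI : DenselyOrdered X := denselyOrdered_of_connected
  rw [@isOpen_iff_forall_mem_open ↥H (zariskiTopology ↥H)]
  intro g₀ hg₀
  have hg₀' : (g₀ : X ≃ₜ X) x < b := hg₀
  have hG0m : Monotone ⇑(g₀ : X ≃ₜ X) := mono_H H hH g₀
  have hG0s : StrictMono ⇑(g₀ : X ≃ₜ X) := strictMono_of_monotone hG0m
  have hG0ss : StrictMono ⇑(g₀ : X ≃ₜ X).symm := symm_strictMono hG0m
  have hβx : x < (g₀ : X ≃ₜ X).symm b := by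
    have := hG0ss hg₀'
    rwa [Homeomorph.symm_apply_apply] at this
  obtain ⟨c, hc1, hc2⟩ := exists_between hβx
  obtain ⟨k, hkm, hkfix, q, hq1, hq2, hq3⟩ := exists_bump_down hA hc1
  have hks : StrictMono ⇑k := strictMono_of_monotone hkm
  have h1 : (g₀ : X ≃ₜ X) (k q) < (g₀ : X ≃ₜ X) q := hG0s hq3
  obtain ⟨u, hu1, hu2⟩ := exists_between h1
  obtain ⟨v, hv1, hv2⟩ := exists_between hu2
  obtain ⟨h, hhm, hhfix, s, hs1, hs2, hs3⟩ := exists_bump_up hA hv1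
  set G0 : X ≃ₜ X := (g₀ : X ≃ₜ X) with hG0def
  set K : ↥H := ⟨k, mem_H H hH hkm⟩ with hKdef
  set Hh : ↥H := ⟨h, mem_H H hH hhm⟩ with hHhdef
  have hword : ∀ f : ↥H, (List.ofFn (fun i : Fin 4 =>
      (if (![true, false, true, false] : Fin 4 → Bool) i then f else f⁻¹) *
      (![K, Hh, K⁻¹, Hh⁻¹] : Fin 4 → ↥H) i)).prod
      = f * K * f⁻¹ * Hh * (f * K⁻¹ * f⁻¹) * Hh⁻¹ := by
    intro f; simp [List.ofFn_succ, mul_assoc]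
  refine ⟨{f : ↥H | (List.ofFn (fun i : Fin 4 =>
      (if (![true, false, true, false] : Fin 4 → Bool) i then f else f⁻¹) *
      (![K, Hh, K⁻¹, Hh⁻¹] : Fin 4 → ↥H) i)).prod ≠ 1}, ?_, ?_, ?_⟩
  · intro f hf
    show (f : X ≃ₜ X) x < b
    by_contra hcon
    push_neg at hcon
    apply hf
    rw [hword f]
    have hfm : Monotone ⇑(f : X ≃ₜ X) := mono_H H hH f
    have hvb : v < b := by
      have h3 : G0 q < b := by
        have h4 : G0 q < G0 (G0.symm b) := hG0s (lt_trans hq2 hc2)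
        rwa [Homeomorph.apply_symm_apply] at h4
      exact lt_trans hv2 h3
    have hdisj : ∀ y, y ∈ ⇑(f : X ≃ₜ X) '' (Icc x c) → y ∉ Icc u v := by
      rintro y ⟨z, hz, rfl⟩ hyuv
      have h2 : b ≤ (f : X ≃ₜ X) z := le_trans hcon (hfm hz.1)
      exact absurd (le_trans h2 hyuv.2) (not_le.2 hvb)
    have hcomm : ((f : X ≃ₜ X) * k * (f : X ≃ₜ X)⁻¹) * h
        = h * ((f : X ≃ₜ X) * k * (f : X ≃ₜ X)⁻¹) :=
      commute_of_disjoint _ _ (⇑(f : X ≃ₜ X) '' Icc x c) (Icc u v)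
        (supp_conj (f : X ≃ₜ X) k _ hkfix) hhfix hdisj
    apply Subtype.ext
    show (f : X ≃ₜ X) * k * (f : X ≃ₜ X)⁻¹ * h * ((f : X ≃ₜ X) * k⁻¹ * (f : X ≃ₜ X)⁻¹) * h⁻¹ = 1
    have hshape : (f : X ≃ₜ X) * k * (f : X ≃ₜ X)⁻¹ * h * ((f : X ≃ₜ X) * k⁻¹ * (f : X ≃ₜ X)⁻¹) * h⁻¹
        = (((f : X ≃ₜ X) * k * (f : X ≃ₜ X)⁻¹) * h) * (h * ((f : X ≃ₜ X) * k * (f : X ≃ₜ X)⁻¹))⁻¹ := by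
      group
    rw [hshape, hcomm, mul_inv_cancel]
  · show IsOpen[generateFrom (zariskiSubbase ↥H)] _
    exact isOpen_generateFrom_of_mem ⟨4, ![true, false, true, false], ![K, Hh, K⁻¹, Hh⁻¹], rfl⟩
  · show (List.ofFn (fun i : Fin 4 =>
      (if (![true, false, true, false] : Fin 4 → Bool) i then g₀ else g₀⁻¹) *
      (![K, Hh, K⁻¹, Hh⁻¹] : Fin 4 → ↥H) i)).prod ≠ 1
    rw [hword g₀]
    intro hc
    have hc' : G0 * k * G0⁻¹ * h * (G0 * k⁻¹ * G0⁻¹) * h⁻¹ = 1 := Subtype.ext_iff.1 hc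
    have h2 : (G0 * k * G0⁻¹) * h * (G0 * k * G0⁻¹)⁻¹ * h⁻¹ = 1 := by
      rw [show (G0 * k * G0⁻¹)⁻¹ = G0 * k⁻¹ * G0⁻¹ by group]
      exact hc'
    have hAeq : (G0 * k * G0⁻¹) * h * (G0 * k * G0⁻¹)⁻¹ = h := mul_inv_eq_one.1 h2
    have hsnot : s ∉ ⇑(G0 * k * G0⁻¹) '' Icc u v := by
      rintro ⟨t, ht, hts⟩
      have hqt : G0.symm t < q := by
        have h5 : G0.symm t < G0.symm (G0 q) := hG0ss (lt_of_le_of_lt ht.2 hv2)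
        rwa [Homeomorph.symm_apply_apply] at h5
      have h4 : G0 (k (G0.symm t)) < G0 (k q) := hG0s (hks hqt)
      have h5 : (G0 * k * G0⁻¹) t = G0 (k (G0.symm t)) := rfl
      rw [h5] at hts
      have h6 : s < u := by rw [← hts]; exact lt_trans h4 hu1
      exact absurd h6 (not_lt.2 hs1.le)
    have heval : ((G0 * k * G0⁻¹) * h * (G0 * k * G0⁻¹)⁻¹) s = s :=
      supp_conj (G0 * k * G0⁻¹) h _ hhfix s hsnot
    rw [hAeq] at heval
    exact hs3.ne' heval

end Word

section Top
variable {X : Type*} [LinearOrder X] [TopologicalSpace X] [OrderTopology X]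
  [CompactSpace X] [ConnectedSpace X]
variable (H : Subgroup (X ≃ₜ X)) (hH : H.carrier = {f : X ≃ₜ X | Monotone ⇑f})

def ptSubbase : Set (Set ↥H) :=
  {S | ∃ x c : X, S = {f : ↥H | c < (f : X ≃ₜ X) x} ∨ S = {f : ↥H | (f : X ≃ₜ X) x < c}}

lemma continuous_evalH (x : X) : Continuous fun f : ↥H => (f : X ≃ₜ X) x := by
  have h0 : Continuous (Subtype.val : ↥H → X ≃ₜ X) := continuous_subtype_val
  have h1 : Continuous (fun g : X ≃ₜ X => (g : C(X, X))) := continuous_induced_dom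
  have h2 : Continuous (fun φ : C(X, X) => φ x) := ContinuousEvalConst.continuous_eval_const x
  exact h2.comp (h1.comp h0)

lemma pt_open_gt (x c : X) : IsOpen {f : ↥H | c < (f : X ≃ₜ X) x} :=
  (isOpen_Ioi (a := c)).preimage (continuous_evalH H x)

lemma pt_open_lt (x c : X) : IsOpen {f : ↥H | (f : X ≃ₜ X) x < c} :=
  (isOpen_Iio (a := c)).preimage (continuous_evalH H x)

include hH in
lemma key_nbhd (g₀ : ↥H) {U : Set X} (hU : IsOpen U) {p : X} (hp : (g₀ : X ≃ₜ X) p ∈ U) :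
    ∃ (N : Set X) (W : Set ↥H), IsOpen N ∧ p ∈ N ∧
      IsOpen[generateFrom (ptSubbase H)] W ∧ g₀ ∈ W ∧
      ∀ f ∈ W, ∀ y ∈ N, (f : X ≃ₜ X) y ∈ U := by
  haveI : DenselyOrdered X := denselyOrdered_of_connected
  obtain ⟨m, hm⟩ := exists_forall_le (X := X)
  obtain ⟨M, hM⟩ := exists_forall_ge (X := X)
  have hG0m := mono_H H hH g₀
  have hG0s := strictMono_of_monotone hG0m
  have hG0ss := symm_strictMono hG0m
  set G0 : X ≃ₜ X := (g₀ : X ≃ₜ X) with hG0def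
  by_cases hmM : M ≤ m
  · have hall : ∀ y : X, y = m := fun y => le_antisymm (le_trans (hM y) hmM) (hm y)
    refine ⟨univ, univ, isOpen_univ, mem_univ _, @isOpen_univ _ (generateFrom (ptSubbase H)),
      mem_univ _, ?_⟩
    intro f _ y _
    have h1 : (f : X ≃ₜ X) y = G0 p := by rw [hall ((f : X ≃ₜ X) y), hall (G0 p)]
    rw [h1]; exact hp
  push_neg at hmM
  have hfixm : ∀ fm : ↥H, (fm : X ≃ₜ X) m = m := by
    intro fm
    have h1 : (fm : X ≃ₜ X) m ≤ m := by
      have h2 : m ≤ (fm : X ≃ₜ X).symm m := hm _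
      have h3 := mono_H H hH fm h2
      rwa [Homeomorph.apply_symm_apply] at h3
    exact le_antisymm h1 (hm _)
  have hfixM : ∀ fm : ↥H, (fm : X ≃ₜ X) M = M := by
    intro fm
    have h1 : M ≤ (fm : X ≃ₜ X) M := by
      have h2 : (fm : X ≃ₜ X).symm M ≤ M := hM _
      have h3 := mono_H H hH fm h2
      rwa [Homeomorph.apply_symm_apply] at h3
    exact le_antisymm (hM _) h1
  rcases eq_or_lt_of_le (hm (G0 p)) with hzm | hzm
  · -- G0 p = m
    have hpm : p = m := G0.injective (by rw [hfixm g₀, ← hzm])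
    have hU' : U ∈ nhds m := by rw [hzm]; exact hU.mem_nhds hp
    obtain ⟨w, hw1, hw2⟩ := exists_Ico_subset_of_mem_nhds hU' ⟨M, hmM⟩
    have hsw : m < G0.symm w := by
      have h3 := hG0ss hw1
      rwa [symm_fix (hfixm g₀)] at h3
    obtain ⟨b', hb1, hb2⟩ := exists_between hsw
    refine ⟨Iio b', {f : ↥H | (f : X ≃ₜ X) b' < w}, isOpen_Iio, ?_, ?_, ?_, ?_⟩
    · rw [hpm]; exact hb1
    · exact isOpen_generateFrom_of_mem ⟨b', w, Or.inr rfl⟩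
    · show G0 b' < w
      have h3 := hG0s hb2
      rwa [Homeomorph.apply_symm_apply] at h3
    · intro f hf y hy
      have hfs := strictMono_of_monotone (mono_H H hH f)
      exact hw2 ⟨hm _, lt_trans (hfs hy) hf⟩
  rcases eq_or_lt_of_le (hM (G0 p)) with hzM | hzM
  · -- G0 p = M
    have hpM : p = M := G0.injective (by rw [hfixM g₀, hzM])
    have hU' : U ∈ nhds M := by rw [← hzM]; exact hU.mem_nhds hp
    obtain ⟨l, hl1, hl2⟩ := exists_Ioc_subset_of_mem_nhds hU' ⟨m, hmM⟩
    have hsl : G0.symm l < M := by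
      have h3 := hG0ss hl1
      rwa [symm_fix (hfixM g₀)] at h3
    obtain ⟨a', ha1, ha2⟩ := exists_between hsl
    refine ⟨Ioi a', {f : ↥H | l < (f : X ≃ₜ X) a'}, isOpen_Ioi, ?_, ?_, ?_, ?_⟩
    · rw [hpM]; exact ha2
    · exact isOpen_generateFrom_of_mem ⟨a', l, Or.inl rfl⟩
    · show l < G0 a'
      have h3 := hG0s ha1
      rwa [Homeomorph.apply_symm_apply] at h3
    · intro f hf y hy
      have hfs := strictMono_of_monotone (mono_H H hH f)
      exact hl2 ⟨lt_trans hf (hfs hy), hM _⟩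
  · -- m < G0 p < M
    have hU' : U ∈ nhds (G0 p) := hU.mem_nhds hp
    obtain ⟨l, w, hlw, hsub⟩ := (mem_nhds_iff_exists_Ioo_subset' ⟨m, hzm⟩ ⟨M, hzM⟩).1 hU'
    have hsl : G0.symm l < p := by
      have h3 := hG0ss hlw.1
      rwa [Homeomorph.symm_apply_apply] at h3
    have hsw : p < G0.symm w := by
      have h3 := hG0ss hlw.2
      rwa [Homeomorph.symm_apply_apply] at h3
    obtain ⟨s', hs1, hs2⟩ := exists_between hsl
    obtain ⟨t', ht1, ht2⟩ := exists_between hsw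
    refine ⟨Ioo s' t', {f : ↥H | l < (f : X ≃ₜ X) s'} ∩ {f : ↥H | (f : X ≃ₜ X) t' < w},
      isOpen_Ioo, ⟨hs2, ht1⟩, ?_, ?_, ?_⟩
    · exact @IsOpen.inter ↥H (generateFrom (ptSubbase H)) _ _
        (isOpen_generateFrom_of_mem ⟨s', l, Or.inl rfl⟩)
        (isOpen_generateFrom_of_mem ⟨t', w, Or.inr rfl⟩)
    · constructor
      · show l < G0 s'
        have h3 := hG0s hs1
        rwa [Homeomorph.apply_symm_apply] at h3
      · show G0 t' < w
        have h3 := hG0s ht2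
        rwa [Homeomorph.apply_symm_apply] at h3
    · rintro f ⟨hf1, hf2⟩ y ⟨hy1, hy2⟩
      have hfs := strictMono_of_monotone (mono_H H hH f)
      exact hsub ⟨lt_trans hf1 (hfs hy1), lt_trans (hfs hy2) hf2⟩

include hH in
lemma mapsTo_open {K U : Set X} (hK : IsCompact K) (hU : IsOpen U) :
    IsOpen[generateFrom (ptSubbase H)] {f : ↥H | MapsTo ⇑(f : X ≃ₜ X) K U} := by
  rw [@isOpen_iff_forall_mem_open ↥H (generateFrom (ptSubbase H))]
  intro g₀ hg₀
  have hch : ∀ p : X, p ∈ K → ∃ (N : Set X) (W : Set ↥H), IsOpen N ∧ p ∈ N ∧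
      IsOpen[generateFrom (ptSubbase H)] W ∧ g₀ ∈ W ∧
      ∀ f ∈ W, ∀ y ∈ N, (f : X ≃ₜ X) y ∈ U :=
    fun p hp => key_nbhd H hH g₀ hU (hg₀ hp)
  choose N W hNopen hNmem hWopen hWmem hprop using hch
  obtain ⟨t, hcover⟩ := hK.elim_nhds_subcover' (fun p hp => N p hp)
    (fun p hp => (hNopen p hp).mem_nhds (hNmem p hp))
  refine ⟨⋂ p ∈ t, W p.1 p.2, ?_, ?_, ?_⟩
  · intro f hf y hy
    obtain ⟨p, hpt, hyN⟩ : ∃ p ∈ t, y ∈ N p.1 p.2 := by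
      have h4 := hcover hy
      simpa using h4
    exact hprop p.1 p.2 f (mem_iInter₂.1 hf p hpt) y hyN
  · exact @isOpen_biInter_finset ↥H _ (generateFrom (ptSubbase H)) t _
      (fun p _ => hWopen p.1 p.2)
  · exact mem_iInter₂.2 fun p _ => hWmem p.1 p.2

lemma instSub_eq : (instTopologicalSpaceSubtype : TopologicalSpace ↥H) =
    generateFrom ((preimage (fun f : ↥H => ((f : X ≃ₜ X) : C(X, X)))) ''
      (image2 (fun K U => {φ : C(X, X) | MapsTo ⇑φ K U})
        {K : Set X | IsCompact K} {U : Set X | IsOpen U})) := by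
  have h1 : (instTopologicalSpaceSubtype : TopologicalSpace ↥H)
      = induced (fun f : ↥H => ((f : X ≃ₜ X) : C(X, X))) ContinuousMap.compactOpen := by
    rw [show (fun f : ↥H => ((f : X ≃ₜ X) : C(X, X)))
        = (fun g : X ≃ₜ X => (g : C(X, X))) ∘ (Subtype.val) from rfl, ← induced_compose]
    rfl
  rw [h1, ContinuousMap.compactOpen_eq, induced_generateFrom_eq]

include hH in
lemma pt_eq_co : generateFrom (ptSubbase H) = (instTopologicalSpaceSubtype : TopologicalSpace ↥H) := by
  apply le_antisymm
  · rw [instSub_eq H]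
    apply le_generateFrom
    rintro s ⟨s0, hs0, rfl⟩
    obtain ⟨K, hK, U, hU, rfl⟩ := hs0
    exact mapsTo_open H hH hK hU
  · apply le_generateFrom
    rintro s ⟨x, c, hs | hs⟩ <;> subst hs
    · exact pt_open_gt H x c
    · exact pt_open_lt H x c

include hH in
lemma continuousMul_H : ContinuousMul ↥H := by
  haveI : DenselyOrdered X := denselyOrdered_of_connected
  constructor
  have key : @Continuous (↥H × ↥H) ↥H _ (generateFrom (ptSubbase H)) (fun p => p.1 * p.2) := by
    rw [continuous_generateFrom_iff]
    rintro s ⟨x, c, hs | hs⟩ <;> subst hs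
    · rw [isOpen_iff_forall_mem_open]
      rintro ⟨f₀, g₀⟩ hfg
      have hfg' : c < (f₀ : X ≃ₜ X) ((g₀ : X ≃ₜ X) x) := hfg
      have hf₀s := strictMono_of_monotone (mono_H H hH f₀)
      have hf₀ss := symm_strictMono (mono_H H hH f₀)
      have h1 : (f₀ : X ≃ₜ X).symm c < (g₀ : X ≃ₜ X) x := by
        have h2 := hf₀ss hfg'
        rwa [Homeomorph.symm_apply_apply] at h2
      obtain ⟨y, hy1, hy2⟩ := exists_between h1
      refine ⟨{f : ↥H | c < (f : X ≃ₜ X) y} ×ˢ {g : ↥H | y < (g : X ≃ₜ X) x}, ?_, ?_, ?_⟩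
      · rintro ⟨f, g⟩ ⟨hf, hg⟩
        show c < (f : X ≃ₜ X) ((g : X ≃ₜ X) x)
        exact lt_trans hf (strictMono_of_monotone (mono_H H hH f) hg)
      · exact (pt_open_gt H y c).prod (pt_open_gt H x y)
      · constructor
        · show c < (f₀ : X ≃ₜ X) y
          have h2 := hf₀s hy1
          rwa [Homeomorph.apply_symm_apply] at h2
        · exact hy2
    · rw [isOpen_iff_forall_mem_open]
      rintro ⟨f₀, g₀⟩ hfg
      have hfg' : (f₀ : X ≃ₜ X) ((g₀ : X ≃ₜ X) x) < c := hfg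
      have hf₀s := strictMono_of_monotone (mono_H H hH f₀)
      have hf₀ss := symm_strictMono (mono_H H hH f₀)
      have h1 : (g₀ : X ≃ₜ X) x < (f₀ : X ≃ₜ X).symm c := by
        have h2 := hf₀ss hfg'
        rwa [Homeomorph.symm_apply_apply] at h2
      obtain ⟨y, hy1, hy2⟩ := exists_between h1
      refine ⟨{f : ↥H | (f : X ≃ₜ X) y < c} ×ˢ {g : ↥H | (g : X ≃ₜ X) x < y}, ?_, ?_, ?_⟩
      · rintro ⟨f, g⟩ ⟨hf, hg⟩
        show (f : X ≃ₜ X) ((g : X ≃ₜ X) x) < c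
        exact lt_trans (strictMono_of_monotone (mono_H H hH f) hg) hf
      · exact (pt_open_lt H y c).prod (pt_open_lt H x y)
      · constructor
        · show (f₀ : X ≃ₜ X) y < c
          have h2 := hf₀s hy2
          rwa [Homeomorph.apply_symm_apply] at h2
        · exact hy1
  exact (pt_eq_co H hH) ▸ key

include hH in
lemma continuousInv_H : ContinuousInv ↥H := by
  constructor
  have key : @Continuous ↥H ↥H _ (generateFrom (ptSubbase H)) (fun f => f⁻¹) := by
    rw [continuous_generateFrom_iff]
    rintro s ⟨x, c, hs | hs⟩ <;> subst hs
    · have heq : (fun f : ↥H => f⁻¹) ⁻¹' {f : ↥H | c < (f : X ≃ₜ X) x}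
          = {f : ↥H | (f : X ≃ₜ X) c < x} := by
        ext f
        simp only [mem_preimage, mem_setOf_eq]
        constructor
        · intro h1
          have h1' : c < (f : X ≃ₜ X).symm x := h1
          have h2 := strictMono_of_monotone (mono_H H hH f) h1'
          rwa [Homeomorph.apply_symm_apply] at h2
        · intro h1
          have h2 := symm_strictMono (mono_H H hH f) h1
          rw [Homeomorph.symm_apply_apply] at h2
          exact h2
      rw [heq]
      exact pt_open_lt H c x
    · have heq : (fun f : ↥H => f⁻¹) ⁻¹' {f : ↥H | (f : X ≃ₜ X) x < c}
          = {f : ↥H | x < (f : X ≃ₜ X) c} := by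
        ext f
        simp only [mem_preimage, mem_setOf_eq]
        constructor
        · intro h1
          have h1' : (f : X ≃ₜ X).symm x < c := h1
          have h2 := strictMono_of_monotone (mono_H H hH f) h1'
          rwa [Homeomorph.apply_symm_apply] at h2
        · intro h1
          have h2 := symm_strictMono (mono_H H hH f) h1
          rw [Homeomorph.symm_apply_apply] at h2
          exact h2
      rw [heq]
      exact pt_open_gt H c x
  exact (pt_eq_co H hH) ▸ key

include hH in
lemma topGroup_H : IsTopologicalGroup ↥H :=
  { toContinuousMul := continuousMul_H H hH, toContinuousInv := continuousInv_H H hH }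

include hH in
lemma one_closed_H : IsClosed {(1 : ↥H)} := by
  rw [← isOpen_compl_iff, isOpen_iff_forall_mem_open]
  intro f hf
  have hne : (f : X ≃ₜ X) ≠ 1 := by
    intro hc
    exact hf (Subtype.ext hc)
  obtain ⟨x, hx⟩ := (hne_one_iff _).1 hne
  rcases lt_or_gt_of_ne hx with h1 | h1
  · refine ⟨{g : ↥H | (g : X ≃ₜ X) x < x}, ?_, pt_open_lt H x x, h1⟩
    intro g hg hc
    rw [hc] at hg
    exact lt_irrefl x hg
  · refine ⟨{g : ↥H | x < (g : X ≃ₜ X) x}, ?_, pt_open_gt H x x, h1⟩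
    intro g hg hc
    rw [hc] at hg
    exact lt_irrefl x hg

end Top

section WordCont

lemma word_continuous {G : Type*} [Group G] (t : TopologicalSpace G) (ht : @IsTopologicalGroup G t _)
    (n : ℕ) (ε : Fin n → Bool) (g : Fin n → G) :
    @Continuous G G t t (fun x => (List.ofFn (fun i => (if ε i then x else x⁻¹) * g i)).prod) := by
  letI := t
  haveI := ht
  have heq : (fun x : G => (List.ofFn (fun i => (if ε i then x else x⁻¹) * g i)).prod)
      = fun x => ((List.finRange n).map (fun i => (if ε i then x else x⁻¹) * g i)).prod := by
    funext x; rw [List.ofFn_eq_map]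
  rw [heq]
  apply continuous_list_prod
  intro i _
  cases hεi : ε i
  · simp only [Bool.false_eq_true, if_false]
    exact continuous_inv.mul continuous_const
  · simp only [if_true]
    exact continuous_id.mul continuous_const

lemma zariski_subbasic_open {G : Type*} [Group G] (t : TopologicalSpace G)
    (ht : @IsTopologicalGroup G t _) (h1 : IsClosed[t] {(1 : G)}) :
    ∀ s ∈ zariskiSubbase G, IsOpen[t] s := by
  letI := t
  haveI := ht
  rintro s ⟨n, ε, g, rfl⟩
  have hcont := word_continuous t ht n ε g
  have heq : {x : G | (List.ofFn fun i => (if ε i then x else x⁻¹) * g i).prod ≠ 1}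
      = (fun x : G => (List.ofFn fun i => (if ε i then x else x⁻¹) * g i).prod) ⁻¹' ({(1 : G)}ᶜ) :=
    rfl
  rw [heq]
  exact h1.isOpen_compl.preimage hcont

end WordCont


/-- Let `X` be a compact connected LOTS such that for every `a < b` the group of
order-preserving homeomorphisms of `[a,b]` is nontrivial.  Then on the group
`G = H₊(X)` of order-preserving homeomorphisms of `X` (here realized as the subgroup `H`
of the homeomorphism group with carrier the monotone homeomorphisms, carrying the
subspace compact-open topology) the Zariski topology coincides with the compact-open
topology, and the compact-open topology is the smallest Hausdorff group topology on `G`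
(i.e. `G` is `a`-minimal): every Hausdorff group topology on `G` is finer. -/
theorem orderHomeoGroup_aMinimal {X : Type*} [LinearOrder X] [TopologicalSpace X]
    [OrderTopology X] [CompactSpace X] [ConnectedSpace X]
    (hA : ∀ a b : X, a < b →
      ∃ h : Set.Icc a b ≃ₜ Set.Icc a b, Monotone ⇑h ∧ h ≠ Homeomorph.refl (Set.Icc a b))
    (H : Subgroup (X ≃ₜ X)) (hH : H.carrier = {f : X ≃ₜ X | Monotone ⇑f}) :
    zariskiTopology ↥H = (instTopologicalSpaceSubtype : TopologicalSpace ↥H) ∧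
    ∀ t : TopologicalSpace ↥H, @T2Space ↥H t → @IsTopologicalGroup ↥H t _ →
      t ≤ (instTopologicalSpaceSubtype : TopologicalSpace ↥H) := by
  have htg := topGroup_H H hH
  have h1c := one_closed_H H hH
  have heq : zariskiTopology ↥H = (instTopologicalSpaceSubtype : TopologicalSpace ↥H) := by
    apply le_antisymm
    · rw [← pt_eq_co H hH]
      apply le_generateFrom
      rintro s ⟨x, c, hs | hs⟩ <;> subst hs
      · exact word_open_gt hA H hH x c
      · exact word_open_lt hA H hH x c
    · show (instTopologicalSpaceSubtype : TopologicalSpace ↥H) ≤ generateFrom (zariskiSubbase ↥H)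
      exact le_generateFrom (zariski_subbasic_open _ htg h1c)
  refine ⟨heq, fun t ht htg' => ?_⟩
  rw [← heq]
  show t ≤ generateFrom (zariskiSubbase ↥H)
  exact le_generateFrom (zariski_subbasic_open t htg'
    (@isClosed_singleton ↥H t (@T2Space.t1Space ↥H t ht) 1))
end

section
/- Let X be a compact connected linearly ordered topological space such that for every pair a < b there exist c, d with a ≤ c < d ≤ b and [c,d] separable. Then the groups H₊(X) and H(X), with the compact-open topology, are a-minimal. -/
set_option linter.unusedSectionVars false
set_option maxHeartbeats 1000000
open Set Topology Filter

namespace AMin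

variable {X : Type*} [TopologicalSpace X]

@[simp] lemma mul_apply (f g : X ≃ₜ X) (x : X) : (f * g) x = f (g x) := rfl
@[simp] lemma one_apply (x : X) : (1 : X ≃ₜ X) x = x := rfl
@[simp] lemma inv_apply (f : X ≃ₜ X) (x : X) : (f⁻¹) x = f.symm x := rfl

/-- two homeomorphisms with disjoint "supports" commute -/
lemma commute_of_disjoint {F G : X ≃ₜ X} {A B : Set X}
    (hFA : ∀ x ∉ A, F x = x) (hFA2 : ∀ x ∈ A, F x ∈ A)
    (hGB : ∀ x ∉ B, G x = x) (hGB2 : ∀ x ∈ B, G x ∈ B)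
    (hAB : ∀ x, x ∈ A → x ∉ B) : F * G = G * F := by
  ext x
  simp only [mul_apply]
  by_cases hx : x ∈ A
  · rw [hGB x (hAB x hx), hGB _ (hAB _ (hFA2 x hx))]
  · by_cases hx' : x ∈ B
    · rw [hFA x (fun h => hAB x h hx'), hFA _ (fun h => hAB _ h (hGB2 x hx'))]
    · rw [hGB x hx', hFA x hx, hGB x hx']

end AMin

section Abstract
open Topology Filter

variable {G : Type*} [Group G] [TopologicalSpace G] [IsTopologicalGroup G]

lemma AMin.test_isOpen [T2Space G] {σ ρ : G} (h : σ * ρ ≠ ρ * σ) :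
    IsOpen {g : G | g * σ * g⁻¹ * ρ ≠ ρ * (g * σ * g⁻¹)} ∧
      (1 : G) ∈ {g : G | g * σ * g⁻¹ * ρ ≠ ρ * (g * σ * g⁻¹)} := by
  constructor
  · have hc : Continuous fun g : G => (g * σ * g⁻¹ * ρ) * (ρ * (g * σ * g⁻¹))⁻¹ := by
      fun_prop
    have : {g : G | g * σ * g⁻¹ * ρ ≠ ρ * (g * σ * g⁻¹)} =
        (fun g : G => (g * σ * g⁻¹ * ρ) * (ρ * (g * σ * g⁻¹))⁻¹) ⁻¹' ({1}ᶜ) := by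
      ext g
      simp only [Set.mem_setOf_eq, Set.mem_preimage, Set.mem_compl_iff,
        Set.mem_singleton_iff, mul_inv_eq_one]
    rw [this]
    exact (isOpen_compl_singleton).preimage hc
  · simpa using h

lemma AMin.translate_nhds {W : Set G} (hW : W ∈ 𝓝 (1 : G)) (f : G) :
    {g : G | g * f⁻¹ ∈ W} ∈ 𝓝 f := by
  have hc : ContinuousAt (fun g : G => g * f⁻¹) f := by fun_prop
  exact hc.preimage_mem_nhds (by simpa using hW)

end Abstract


namespace AMinOrd

variable {X : Type*} [ConditionallyCompleteLinearOrder X] [TopologicalSpace X] [OrderTopology X]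

lemma dense_of_connected [ConnectedSpace X] : DenselyOrdered X := by
  constructor
  intro a b hab
  by_contra h
  push_neg at h
  have hcov : (Set.univ : Set X) ⊆ Iio b ∪ Ioi a := by
    intro x _
    rcases lt_or_ge x b with hx | hx
    · exact Or.inl hx
    · rcases lt_or_ge a x with hy | hy
      · exact Or.inr hy
      · exact ((not_le.mpr hab) (hx.trans hy)).elim
  have hne1 : ((Set.univ : Set X) ∩ Iio b).Nonempty := ⟨a, trivial, hab⟩
  have hne2 : ((Set.univ : Set X) ∩ Ioi a).Nonempty := ⟨b, trivial, hab⟩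
  obtain ⟨x, -, hx1, hx2⟩ :=
    isPreconnected_univ _ _ isOpen_Iio isOpen_Ioi hcov hne1 hne2
  exact absurd hx1 (not_lt.mpr (h x hx2))

lemma exists_bot [CompactSpace X] [Nonempty X] : ∃ b : X, ∀ x, b ≤ x := by
  obtain ⟨b, -, hb⟩ := (isCompact_univ (X := X)).exists_isLeast univ_nonempty
  exact ⟨b, fun x => hb trivial⟩

lemma exists_top [CompactSpace X] [Nonempty X] : ∃ b : X, ∀ x, x ≤ b := by
  obtain ⟨b, -, hb⟩ := (isCompact_univ (X := X)).exists_isGreatest univ_nonempty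
  exact ⟨b, fun x => hb trivial⟩

lemma mono_or_anti [ConnectedSpace X] (f : X ≃ₜ X) :
    Monotone ⇑f ∨ Antitone ⇑f := by
  haveI := dense_of_connected (X := X)
  rcases f.continuous.strictMono_of_inj f.injective with h | h
  · exact Or.inl h.monotone
  · exact Or.inr h.antitone

/-- a monotone bijection fixing everything outside `Ioo c d` maps `Icc c d` to itself. -/
lemma mapsTo_Icc {σ : X ≃ₜ X} {c d : X} (hm : Monotone ⇑σ)
    (hs : ∀ x, x ∉ Ioo c d → σ x = x) (hcd : c ≤ d) :
    ∀ x ∈ Icc c d, σ x ∈ Icc c d := by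
  intro x hx
  have hc : σ c = c := hs c (by simp)
  have hd : σ d = d := hs d (by simp)
  exact ⟨hc ▸ hm hx.1, hd ▸ hm hx.2⟩

lemma mono_fixes_bot [CompactSpace X] [Nonempty X] {f : X ≃ₜ X} (hm : Monotone ⇑f)
    {b : X} (hb : ∀ x, b ≤ x) : f b = b := by
  obtain ⟨y, hy⟩ := f.surjective b
  have h1 : f b ≤ b := le_of_le_of_eq (hm (hb y)) hy
  exact le_antisymm h1 (hb _)

end AMinOrd




namespace AMinBump

variable {X : Type*} [ConditionallyCompleteLinearOrder X] [TopologicalSpace X] [OrderTopology X]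
  [DenselyOrdered X]

theorem extend_orderIso {c d : X} (hcd : c < d) {S : Set X} (hSsub : S ⊆ Ioo c d)
    (hSd : ∀ x y : X, c ≤ x → x < y → y ≤ d → ∃ s ∈ S, x < s ∧ s < y)
    (φ : ↥S ≃o ↥S) :
    ∃ σ : X ≃ₜ X, Monotone ⇑σ ∧ (∀ x, x ∉ Set.Ioo c d → σ x = x) ∧
      (∀ q : ↥S, σ (q : X) = ((φ q : X))) := by
  classical
  set A : X → Set X := fun x => (fun q : ↥S => (φ q : X)) '' {q : ↥S | (q : X) ≤ x} with hA
  set F : X → X := fun x => if x ∈ Ioo c d then sSup (A x) else x with hF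
  have hAbdd : ∀ x, BddAbove (A x) := by
    intro x
    refine ⟨d, ?_⟩
    rintro _ ⟨q, -, rfl⟩
    exact (hSsub (φ q).2).2.le
  have hAne : ∀ x ∈ Ioo c d, (A x).Nonempty := by
    intro x hx
    obtain ⟨s, hs, -, h2⟩ := hSd c x le_rfl hx.1 hx.2.le
    exact ⟨_, ⟨⟨s, hs⟩, h2.le, rfl⟩⟩
  have hub : ∀ (x : X) (q1 : ↥S), x ≤ (q1 : X) → (φ q1 : X) ∈ upperBounds (A x) := by
    intro x q1 hxq
    rintro _ ⟨q', hq', rfl⟩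
    have : q' ≤ q1 := Subtype.coe_le_coe.1 (le_trans hq' hxq)
    exact Subtype.coe_le_coe.2 (φ.monotone this)
  have hmem : ∀ (x : X) (q : ↥S), (q : X) ≤ x → (φ q : X) ≤ sSup (A x) := fun x q h =>
    le_csSup (hAbdd x) ⟨q, h, rfl⟩
  have hFin : ∀ x ∈ Ioo c d, F x ∈ Ioo c d := by
    intro x hx
    rw [hF]
    simp only [if_pos hx]
    constructor
    · obtain ⟨s, hs, -, h2⟩ := hSd c x le_rfl hx.1 hx.2.le
      exact lt_of_lt_of_le (hSsub (φ ⟨s, hs⟩).2).1 (hmem x ⟨s, hs⟩ h2.le)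
    · obtain ⟨s, hs, h1, -⟩ := hSd x d hx.1.le hx.2 le_rfl
      exact lt_of_le_of_lt (csSup_le (hAne x hx) (hub x ⟨s, hs⟩ h1.le)) (hSsub (φ ⟨s, hs⟩).2).2
  have hFfix : ∀ x, x ∉ Ioo c d → F x = x := by
    intro x hx; rw [hF]; simp only [if_neg hx]
  have hFS : ∀ q : ↥S, F (q : X) = (φ q : X) := by
    intro q
    have hq : (q : X) ∈ Ioo c d := hSsub q.2
    rw [hF]; simp only [if_pos hq]
    exact le_antisymm (csSup_le (hAne _ hq) (hub _ q le_rfl)) (hmem _ q le_rfl)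
  have hFsm : StrictMono F := by
    intro x x' hlt
    by_cases hx : x ∈ Ioo c d <;> by_cases hx' : x' ∈ Ioo c d
    · -- both inside
      obtain ⟨s1, hs1, ha1, hb1⟩ := hSd x x' hx.1.le hlt hx'.2.le
      obtain ⟨s2, hs2, ha2, hb2⟩ := hSd s1 x' (hSsub hs1).1.le hb1 hx'.2.le
      have e1 : F x ≤ (φ ⟨s1, hs1⟩ : X) := by
        rw [hF]; simp only [if_pos hx]
        exact csSup_le (hAne x hx) (hub x ⟨s1, hs1⟩ ha1.le)
      have e2 : (φ (⟨s1, hs1⟩ : ↥S) : X) < (φ ⟨s2, hs2⟩ : X) := by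
        exact Subtype.coe_lt_coe.2 (φ.strictMono (Subtype.coe_lt_coe.1 ha2))
      have e3 : (φ (⟨s2, hs2⟩ : ↥S) : X) ≤ F x' := by
        rw [hF]; simp only [if_pos hx']
        exact hmem x' ⟨s2, hs2⟩ hb2.le
      exact lt_of_le_of_lt e1 (lt_of_lt_of_le e2 e3)
    · -- x inside, x' outside: d ≤ x'
      have hdx' : d ≤ x' := by
        rcases not_and_or.1 hx' with h | h
        · exact absurd (hx.1.trans hlt) h
        · exact not_lt.1 h
      have := (hFin x hx).2
      rw [hFfix x' hx']
      exact this.trans_le hdx'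
    · -- x outside, x' inside: x ≤ c
      have hxc : x ≤ c := by
        rcases not_and_or.1 hx with h | h
        · exact not_lt.1 h
        · exact absurd (hlt.trans hx'.2) h
      rw [hFfix x hx]
      exact lt_of_le_of_lt hxc (hFin x' hx').1
    · rw [hFfix x hx, hFfix x' hx']; exact hlt
  have hFsurj : Function.Surjective F := by
    intro y
    by_cases hy : y ∈ Ioo c d
    · set B : Set X := (fun q : ↥S => (q : X)) '' {q : ↥S | (φ q : X) ≤ y} with hB
      have hBne : B.Nonempty := by
        obtain ⟨s, hs, -, h2⟩ := hSd c y le_rfl hy.1 hy.2.le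
        refine ⟨_, φ.symm ⟨s, hs⟩, ?_, rfl⟩
        simp only [mem_setOf_eq, OrderIso.apply_symm_apply]
        exact h2.le
      have hBbdd : BddAbove B := by
        refine ⟨d, ?_⟩
        rintro _ ⟨q, -, rfl⟩
        exact (hSsub q.2).2.le
      set x := sSup B with hxdef
      have hxIoo : x ∈ Ioo c d := by
        constructor
        · obtain ⟨b0, q0, hq0m, rfl⟩ := hBne
          exact lt_of_lt_of_le (hSsub q0.2).1 (le_csSup hBbdd ⟨q0, hq0m, rfl⟩)
        · obtain ⟨s2, hs2, h1, h2⟩ := hSd y d hy.1.le hy.2 le_rfl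
          have hubq : (φ.symm ⟨s2, hs2⟩ : X) ∈ upperBounds B := by
            rintro _ ⟨q', hq', rfl⟩
            refine Subtype.coe_le_coe.2 (φ.le_iff_le.1 ?_)
            rw [OrderIso.apply_symm_apply]
            exact Subtype.coe_le_coe.1 (le_trans hq' h1.le)
          exact lt_of_le_of_lt (csSup_le hBne hubq) (hSsub (φ.symm ⟨s2, hs2⟩).2).2
      refine ⟨x, ?_⟩
      rw [hF]; simp only [if_pos hxIoo]
      have hlub : IsLUB (A x) y := by
        constructor
        · rintro _ ⟨q, hq, rfl⟩
          by_contra hlt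
          push_neg at hlt
          obtain ⟨s'', hs'', h1'', h2''⟩ :=
            hSd y (φ q) hy.1.le hlt (hSsub (φ q).2).2.le
          have hub'' : (φ.symm ⟨s'', hs''⟩ : X) ∈ upperBounds B := by
            rintro _ ⟨q', hq', rfl⟩
            refine Subtype.coe_le_coe.2 (φ.le_iff_le.1 ?_)
            rw [OrderIso.apply_symm_apply]
            exact Subtype.coe_le_coe.1 (le_trans hq' h1''.le)
          have h1 : x ≤ (φ.symm ⟨s'', hs''⟩ : X) := csSup_le hBne hub''
          have h2 : (φ.symm (⟨s'', hs''⟩ : ↥S)) < q := by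
            refine φ.lt_iff_lt.1 ?_
            rw [OrderIso.apply_symm_apply]
            exact Subtype.coe_lt_coe.1 h2''
          exact absurd (hq.trans h1) (not_le.2 (Subtype.coe_lt_coe.2 h2))
        · intro b hb
          by_contra hby
          push_neg at hby
          have hcb : c < b := by
            obtain ⟨a0, q0, hq0, rfl⟩ := hAne x hxIoo
            exact lt_of_lt_of_le (hSsub (φ q0).2).1 (hb ⟨q0, hq0, rfl⟩)
          obtain ⟨s3, hs3, h13, h23⟩ := hSd b y hcb.le hby hy.2.le
          have hq3B : ((φ.symm ⟨s3, hs3⟩ : ↥S) : X) ∈ B := by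
            refine ⟨φ.symm ⟨s3, hs3⟩, ?_, rfl⟩
            simp only [mem_setOf_eq, OrderIso.apply_symm_apply]
            exact h23.le
          have hq3x : ((φ.symm ⟨s3, hs3⟩ : ↥S) : X) ≤ x := le_csSup hBbdd hq3B
          have : (φ (φ.symm ⟨s3, hs3⟩) : X) ∈ A x := ⟨φ.symm ⟨s3, hs3⟩, hq3x, rfl⟩
          rw [OrderIso.apply_symm_apply] at this
          exact absurd (hb this) (not_le.2 h13)
      exact hlub.csSup_eq (hAne x hxIoo)
    · exact ⟨y, hFfix y hy⟩
  refine ⟨(StrictMono.orderIsoOfSurjective F hFsm hFsurj).toHomeomorph, ?_, ?_, ?_⟩ <;>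
    rw [show ⇑(StrictMono.orderIsoOfSurjective F hFsm hFsurj).toHomeomorph = F from rfl]
  · exact hFsm.monotone
  · exact hFfix
  · exact hFS


theorem exists_bump_pair {c d : X} (hcd : c < d)
    (hsep : TopologicalSpace.SeparableSpace (Set.Icc c d)) :
    ∃ σ ρ : X ≃ₜ X, Monotone ⇑σ ∧ Monotone ⇑ρ ∧
      (∀ x, x ∉ Set.Ioo c d → σ x = x) ∧ (∀ x, x ∉ Set.Ioo c d → ρ x = x) ∧
      ∃ z : X, σ (ρ z) ≠ ρ (σ z) := by
  classical
  obtain ⟨D₀, hD₀c, hD₀d⟩ := TopologicalSpace.exists_countable_dense (Set.Icc c d)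
  set S : Set X := (Subtype.val '' D₀) ∩ Ioo c d with hSdef
  have hSsub : S ⊆ Ioo c d := inter_subset_right
  have hSd : ∀ x y : X, c ≤ x → x < y → y ≤ d → ∃ s ∈ S, x < s ∧ s < y := by
    intro x y hx hxy hyd
    obtain ⟨z, hz1, hz2⟩ := exists_between hxy
    have hzIcc : z ∈ Icc c d := ⟨hx.trans hz1.le, hz2.le.trans hyd⟩
    have hV : IsOpen (Subtype.val ⁻¹' (Ioo x y) : Set (Icc c d)) :=
      isOpen_Ioo.preimage continuous_subtype_val
    obtain ⟨w, hwD, hwV⟩ := hD₀d.exists_mem_open hV ⟨⟨z, hzIcc⟩, hz1, hz2⟩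
    have hwIoo : (w : X) ∈ Ioo c d :=
      ⟨lt_of_le_of_lt hx hwV.1, lt_of_lt_of_le hwV.2 hyd⟩
    exact ⟨w, ⟨⟨w, hwD, rfl⟩, hwIoo⟩, hwV.1, hwV.2⟩
  have hScnt : S.Countable := Set.Countable.mono inter_subset_left (hD₀c.image _)
  haveI : Countable ↥S := hScnt.to_subtype
  haveI : Nonempty ↥S := by
    obtain ⟨s, hs, -, -⟩ := hSd c d le_rfl hcd le_rfl
    exact ⟨⟨s, hs⟩⟩
  haveI : DenselyOrdered ↥S := by
    constructor
    intro a b hab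
    obtain ⟨s, hs, h1, h2⟩ := hSd a b (hSsub a.2).1.le (Subtype.coe_lt_coe.2 hab)
      (hSsub b.2).2.le
    exact ⟨⟨s, hs⟩, Subtype.coe_lt_coe.1 h1, Subtype.coe_lt_coe.1 h2⟩
  haveI : NoMinOrder ↥S := by
    constructor
    intro a
    obtain ⟨s, hs, -, h2⟩ := hSd c a le_rfl (hSsub a.2).1 (hSsub a.2).2.le
    exact ⟨⟨s, hs⟩, Subtype.coe_lt_coe.1 h2⟩
  haveI : NoMaxOrder ↥S := by
    constructor
    intro a
    obtain ⟨s, hs, h1, -⟩ := hSd a d (hSsub a.2).1.le (hSsub a.2).2 le_rfl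
    exact ⟨⟨s, hs⟩, Subtype.coe_lt_coe.1 h1⟩
  obtain ⟨e⟩ := Order.iso_of_countable_dense ℚ ↥S
  set φf : ↥S ≃o ↥S := (e.symm.trans (OrderIso.addRight (1 : ℚ))).trans e with hφf
  set φg : ↥S ≃o ↥S := (e.symm.trans (OrderIso.mulLeft₀ (2 : ℚ) (by norm_num))).trans e with hφg
  obtain ⟨σ, hσm, hσfix, hσS⟩ := extend_orderIso hcd hSsub hSd φf
  obtain ⟨ρ, hρm, hρfix, hρS⟩ := extend_orderIso hcd hSsub hSd φg
  refine ⟨σ, ρ, hσm, hρm, hσfix, hρfix, ((e (1 : ℚ)) : X), ?_⟩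
  have hφf_app : ∀ q : ℚ, φf (e q) = e (q + 1) := by
    intro q
    simp [hφf, OrderIso.trans_apply]
  have hφg_app : ∀ q : ℚ, φg (e q) = e (2 * q) := by
    intro q
    simp [hφg, OrderIso.trans_apply]
  have h1 : σ (ρ ((e (1 : ℚ)) : X)) = ((e (3 : ℚ)) : X) := by
    rw [hρS (e (1 : ℚ)), hφg_app, show (2 : ℚ) * 1 = 2 by norm_num,
      hσS (e (2 : ℚ)), hφf_app, show (2 : ℚ) + 1 = 3 by norm_num]
  have h2 : ρ (σ ((e (1 : ℚ)) : X)) = ((e (4 : ℚ)) : X) := by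
    rw [hσS (e (1 : ℚ)), hφf_app, show (1 : ℚ) + 1 = 2 by norm_num,
      hρS (e (2 : ℚ)), hφg_app, show (2 : ℚ) * 2 = 4 by norm_num]
  rw [h1, h2]
  intro hcontra
  have : (3 : ℚ) = 4 := e.injective (Subtype.val_injective hcontra)
  norm_num at this

end AMinBump

namespace AMinMaster

variable {X : Type*} [ConditionallyCompleteLinearOrder X] [TopologicalSpace X] [OrderTopology X]
  [CompactSpace X] [ConnectedSpace X]

/-- abbreviation for the separability hypothesis -/
def SepHyp (X : Type*) [ConditionallyCompleteLinearOrder X] [TopologicalSpace X] : Prop :=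
  ∀ a b : X, a < b → ∃ c d : X, a ≤ c ∧ c < d ∧ d ≤ b ∧
    TopologicalSpace.SeparableSpace (Set.Icc c d)

theorem bump_in (hC : SepHyp X) {p q : X} (hpq : p < q) :
    ∃ c d : X, p < c ∧ c < d ∧ d < q ∧ ∃ σ ρ : X ≃ₜ X, Monotone ⇑σ ∧ Monotone ⇑ρ ∧
      (∀ x, x ∉ Ioo c d → σ x = x) ∧ (∀ x, x ∉ Ioo c d → ρ x = x) ∧
      ∃ z : X, σ (ρ z) ≠ ρ (σ z) := by
  haveI := AMinOrd.dense_of_connected (X := X)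
  obtain ⟨p', hp'1, hp'2⟩ := exists_between hpq
  obtain ⟨q', hq'1, hq'2⟩ := exists_between hp'2
  obtain ⟨c, d, hc1, hcd, hd1, hsep⟩ := hC p' q' hq'1
  exact ⟨c, d, lt_of_lt_of_le hp'1 hc1, hcd, lt_of_le_of_lt hd1 hq'2,
    AMinBump.exists_bump_pair hcd hsep⟩

variable {G : Type*} [Group G] [TopologicalSpace G] [T2Space G] [IsTopologicalGroup G]
  (π : G →* (X ≃ₜ X))

/-- From a non-commuting bump pair and elements of `G` mapping onto them, get an open
test set around `1`. -/
theorem test_setup (hinj : Function.Injective ⇑π)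
    {σ ρ : X ≃ₜ X} {z : X} (hz : σ (ρ z) ≠ ρ (σ z))
    (hσ : σ ∈ Set.range ⇑π) (hρ : ρ ∈ Set.range ⇑π) :
    ∃ W : Set G, W ∈ 𝓝 (1 : G) ∧
      ∀ g ∈ W, ¬ ((π g * σ * (π g)⁻¹) * ρ = ρ * (π g * σ * (π g)⁻¹)) := by
  obtain ⟨gσ, rfl⟩ := hσ
  obtain ⟨gρ, rfl⟩ := hρ
  have hσρ : π gσ * π gρ ≠ π gρ * π gσ := by
    intro hh
    exact hz (by rw [show (π gσ) ((π gρ) z) = ((π gσ) * (π gρ)) z from rfl, hh]; rfl)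
  have hne : gσ * gρ ≠ gρ * gσ := by
    intro h
    exact hσρ (by simpa [map_mul] using congrArg (⇑π) h)
  obtain ⟨hopen, hmem⟩ := AMin.test_isOpen hne
  refine ⟨_, hopen.mem_nhds hmem, ?_⟩
  intro g hg hcomm
  apply hg
  have : π (g * gσ * g⁻¹ * gρ) = π (gρ * (g * gσ * g⁻¹)) := by
    simp only [map_mul, map_inv]
    exact hcomm
  exact hinj this

/-- bad elements commute with the conjugated test: generic exclusion lemma. -/
theorem excl {g : X ≃ₜ X} {σ ρ : X ≃ₜ X} {c d : X} (hcd : c < d)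
    (hσm : Monotone ⇑σ) (hρm : Monotone ⇑ρ)
    (hσf : ∀ x, x ∉ Ioo c d → σ x = x) (hρf : ∀ x, x ∉ Ioo c d → ρ x = x)
    (hdisj : ∀ w ∈ Icc c d, g w ∉ Icc c d) :
    (g * σ * g⁻¹) * ρ = ρ * (g * σ * g⁻¹) := by
  apply AMin.commute_of_disjoint (A := ⇑g '' Icc c d) (B := Icc c d)
  · intro x hx
    have hgs : g.symm x ∉ Icc c d := by
      intro h
      exact hx ⟨g.symm x, h, g.apply_symm_apply x⟩
    have : σ (g.symm x) = g.symm x := hσf _ (fun h => hgs ⟨h.1.le, h.2.le⟩)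
    simp only [AMin.mul_apply, AMin.inv_apply, this, g.apply_symm_apply]
  · rintro _ ⟨w, hw, rfl⟩
    refine ⟨σ w, AMinOrd.mapsTo_Icc hσm hσf hcd.le w hw, ?_⟩
    simp only [AMin.mul_apply, AMin.inv_apply, g.symm_apply_apply]
  · intro x hx
    exact hρf x (fun h => hx ⟨h.1.le, h.2.le⟩)
  · exact AMinOrd.mapsTo_Icc hρm hρf hcd.le
  · rintro _ ⟨w, hw, rfl⟩
    exact hdisj w hw

theorem L1 (hinj : Function.Injective ⇑π)
    (hsur : ∀ σ : X ≃ₜ X, Monotone ⇑σ → σ ∈ Set.range ⇑π)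
    (hC : SepHyp X) {a y : X} (hay : a < y) :
    ∃ W ∈ 𝓝 (1 : G), ∀ g ∈ W, Monotone ⇑(π g) → a < π g y := by
  obtain ⟨c, d, hc, hcd, hd, σ, ρ, hσm, hρm, hσf, hρf, hz⟩ := bump_in hC hay
  obtain ⟨W, hW, hWex⟩ := test_setup π hinj hz.choose_spec (hsur σ hσm) (hsur ρ hρm)
  refine ⟨W, hW, ?_⟩
  intro g hg hmono
  by_contra hle
  push_neg at hle
  refine hWex g hg (excl hcd hσm hρm hσf hρf ?_)
  intro w hw hwB
  have h1 : π g w ≤ a := le_trans (hmono (hw.2.trans hd.le)) hle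
  exact absurd (lt_of_lt_of_le hc hwB.1) (not_lt.2 h1)

theorem L2 (hinj : Function.Injective ⇑π)
    (hsur : ∀ σ : X ≃ₜ X, Monotone ⇑σ → σ ∈ Set.range ⇑π)
    (hC : SepHyp X) {y b : X} (hyb : y < b) :
    ∃ W ∈ 𝓝 (1 : G), ∀ g ∈ W, Monotone ⇑(π g) → π g y < b := by
  obtain ⟨c, d, hc, hcd, hd, σ, ρ, hσm, hρm, hσf, hρf, hz⟩ := bump_in hC hyb
  obtain ⟨W, hW, hWex⟩ := test_setup π hinj hz.choose_spec (hsur σ hσm) (hsur ρ hρm)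
  refine ⟨W, hW, ?_⟩
  intro g hg hmono
  by_contra hle
  push_neg at hle
  refine hWex g hg (excl hcd hσm hρm hσf hρf ?_)
  intro w hw hwB
  have h1 : b ≤ π g w := le_trans hle (hmono (hc.le.trans hw.1))
  exact absurd (lt_of_le_of_lt hwB.2 hd) (not_lt.2 h1)

theorem L0 (hinj : Function.Injective ⇑π)
    (hsur : ∀ σ : X ≃ₜ X, Monotone ⇑σ → σ ∈ Set.range ⇑π)
    (hC : SepHyp X) (hne : ∃ x y : X, x < y) :
    ∃ W ∈ 𝓝 (1 : G), ∀ g ∈ W, Monotone ⇑(π g) := by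
  obtain ⟨bot, hbot⟩ := AMinOrd.exists_bot (X := X)
  obtain ⟨top, htop⟩ := AMinOrd.exists_top (X := X)
  have hbt : bot < top := by
    obtain ⟨x, y, hxy⟩ := hne
    exact lt_of_le_of_lt (hbot x) (lt_of_lt_of_le hxy (htop y))
  haveI := AMinOrd.dense_of_connected (X := X)
  obtain ⟨m, hm1, hm2⟩ := exists_between hbt
  obtain ⟨c₁, d₁, hc₁, hcd₁, hd₁, σ₁, ρ₁, hσm₁, hρm₁, hσf₁, hρf₁, hz₁⟩ := bump_in hC hm1
  obtain ⟨c₂, d₂, hc₂, hcd₂, hd₂, σ₂, ρ₂, hσm₂, hρm₂, hσf₂, hρf₂, hz₂⟩ := bump_in hC hm2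
  obtain ⟨W₁, hW₁, hWex₁⟩ := test_setup π hinj hz₁.choose_spec (hsur σ₁ hσm₁) (hsur ρ₁ hρm₁)
  obtain ⟨W₂, hW₂, hWex₂⟩ := test_setup π hinj hz₂.choose_spec (hsur σ₂ hσm₂) (hsur ρ₂ hρm₂)
  refine ⟨W₁ ∩ W₂, inter_mem hW₁ hW₂, ?_⟩
  intro g hg
  rcases AMinOrd.mono_or_anti (π g) with h | hanti
  · exact h
  exfalso
  rcases le_total (π g m) m with hgm | hgm
  · refine hWex₂ g hg.2 (excl hcd₂ hσm₂ hρm₂ hσf₂ hρf₂ ?_)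
    intro w hw hwB
    have : π g w ≤ m := le_trans (hanti (hc₂.le.trans hw.1)) hgm
    exact absurd (lt_of_lt_of_le hc₂ hwB.1) (not_lt.2 this)
  · refine hWex₁ g hg.1 (excl hcd₁ hσm₁ hρm₁ hσf₁ hρf₁ ?_)
    intro w hw hwB
    have : m ≤ π g w := le_trans hgm (hanti (hw.2.trans hd₁.le))
    exact absurd (lt_of_le_of_lt hwB.2 hd₁) (not_lt.2 this)

theorem nbhd_cond (hinj : Function.Injective ⇑π)
    (hsur : ∀ σ : X ≃ₜ X, Monotone ⇑σ → σ ∈ Set.range ⇑π)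
    (hC : SepHyp X) (hne : ∃ x y : X, x < y) {k : X} {U : Set X} (hkU : U ∈ 𝓝 k) :
    ∃ (V : Set X) (W : Set G), IsOpen V ∧ k ∈ V ∧ W ∈ 𝓝 (1 : G) ∧
      ∀ g ∈ W, Monotone ⇑(π g) → ∀ x ∈ V, π g x ∈ U := by
  haveI := AMinOrd.dense_of_connected (X := X)
  by_cases hl : ∃ l, l < k
  · by_cases hu : ∃ u, k < u
    · obtain ⟨a, b, hk, hsub⟩ := (mem_nhds_iff_exists_Ioo_subset' hl hu).1 hkU
      obtain ⟨p, hp1, hp2⟩ := exists_between hk.1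
      obtain ⟨q, hq1, hq2⟩ := exists_between hk.2
      obtain ⟨W₁, hW₁, hP₁⟩ := L1 π hinj hsur hC hp1
      obtain ⟨W₂, hW₂, hP₂⟩ := L2 π hinj hsur hC hq2
      refine ⟨Ioo p q, W₁ ∩ W₂, isOpen_Ioo, ⟨hp2, hq1⟩, inter_mem hW₁ hW₂, ?_⟩
      intro g hg hmono x hx
      refine hsub ⟨lt_of_lt_of_le (hP₁ g hg.1 hmono) (hmono hx.1.le), ?_⟩
      exact lt_of_le_of_lt (hmono hx.2.le) (hP₂ g hg.2 hmono)
    · -- k is the top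
      push_neg at hu
      obtain ⟨a', ha'⟩ := hl
      obtain ⟨a'', hk', hsub⟩ := exists_Ioc_subset_of_mem_nhds hkU ⟨a', ha'⟩
      obtain ⟨p, hp1, hp2⟩ := exists_between hk'
      obtain ⟨W₁, hW₁, hP₁⟩ := L1 π hinj hsur hC hp1
      refine ⟨Ioi p, W₁, isOpen_Ioi, hp2, hW₁, ?_⟩
      intro g hg hmono x hx
      exact hsub ⟨lt_of_lt_of_le (hP₁ g hg hmono) (hmono (le_of_lt hx)), hu _⟩
  · -- k is the bottom
    push_neg at hl
    have hu : ∃ u, k < u := by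
      obtain ⟨x, y, hxy⟩ := hne
      exact ⟨y, lt_of_le_of_lt (hl x) hxy⟩
    obtain ⟨b'', hk', hsub⟩ := exists_Ico_subset_of_mem_nhds hkU hu
    obtain ⟨q, hq1, hq2⟩ := exists_between hk'
    obtain ⟨W₂, hW₂, hP₂⟩ := L2 π hinj hsur hC hq2
    refine ⟨Iio q, W₂, isOpen_Iio, hq1, hW₂, ?_⟩
    intro g hg hmono x hx
    exact hsub ⟨hl _, lt_of_le_of_lt (hmono (le_of_lt hx)) (hP₂ g hg hmono)⟩

theorem master (hinj : Function.Injective ⇑π)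
    (hsur : ∀ σ : X ≃ₜ X, Monotone ⇑σ → σ ∈ Set.range ⇑π)
    (hC : SepHyp X) (K U : Set X) (hK : IsCompact K) (hU : IsOpen U) :
    IsOpen {g : G | ∀ x ∈ K, π g x ∈ U} := by
  by_cases hne : ∃ x y : X, x < y
  · rw [isOpen_iff_mem_nhds]
    intro g₀ hg₀
    set K' : Set X := ⇑(π g₀) '' K with hK'def
    have hK' : IsCompact K' := hK.image (π g₀).continuous
    have hK'U : ∀ k ∈ K', k ∈ U := by
      rintro _ ⟨x, hx, rfl⟩
      exact hg₀ x hx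
    have hcond : ∀ k ∈ K', ∃ (V : Set X) (W : Set G), IsOpen V ∧ k ∈ V ∧ W ∈ 𝓝 (1 : G) ∧
        ∀ g ∈ W, Monotone ⇑(π g) → ∀ x ∈ V, π g x ∈ U := fun k hk =>
      nbhd_cond π hinj hsur hC hne (hU.mem_nhds (hK'U k hk))
    choose! V W hVopen hkV hWnhds hWP using hcond
    obtain ⟨F, hFsub, hFcov⟩ :=
      hK'.elim_nhds_subcover V (fun k hk => (hVopen k hk).mem_nhds (hkV k hk))
    obtain ⟨W₀, hW₀, hP₀⟩ := L0 π hinj hsur hC hne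
    have hWtot : (W₀ ∩ ⋂ k ∈ F, W k) ∈ 𝓝 (1 : G) :=
      inter_mem hW₀ ((Filter.biInter_finset_mem F).2 fun k hk => hWnhds k (hFsub k hk))
    refine mem_of_superset (AMin.translate_nhds hWtot g₀) ?_
    intro g hgW
    simp only [mem_setOf_eq] at hgW ⊢
    have hw : (g * g₀⁻¹) ∈ W₀ ∩ ⋂ k ∈ F, W k := hgW
    have hgdecomp : π g = π (g * g₀⁻¹) * π g₀ := by
      rw [← map_mul, inv_mul_cancel_right]
    have hmono : Monotone ⇑(π (g * g₀⁻¹)) := hP₀ _ hw.1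
    intro x hx
    have hxK' : π g₀ x ∈ K' := ⟨x, hx, rfl⟩
    have := hFcov hxK'
    simp only [mem_iUnion] at this
    obtain ⟨k, hkF, hxV⟩ := this
    have happ : π g x = π (g * g₀⁻¹) (π g₀ x) := by
      rw [hgdecomp]; rfl
    rw [happ]
    refine hWP k (hFsub k hkF) (g * g₀⁻¹) ?_ hmono (π g₀ x) hxV
    have := hw.2
    simp only [mem_iInter] at this
    exact this k hkF
  · -- degenerate : X has at most one point
    push_neg at hne
    have hid : ∀ (f : X ≃ₜ X) (x : X), f x = x := fun f x =>
      le_antisymm (hne _ _) (hne _ _)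
    by_cases hKU : ∀ x ∈ K, x ∈ U
    · have : {g : G | ∀ x ∈ K, π g x ∈ U} = univ := by
        ext g; simp only [mem_setOf_eq, mem_univ, iff_true]
        intro x hx; rw [hid (π g) x]; exact hKU x hx
      rw [this]; exact isOpen_univ
    · have : {g : G | ∀ x ∈ K, π g x ∈ U} = ∅ := by
        ext g; simp only [mem_setOf_eq, mem_empty_iff_false, iff_false]
        intro h
        apply hKU
        intro x hx
        have := h x hx
        rwa [hid (π g) x] at this
      rw [this]; exact isOpen_empty

end AMinMaster

namespace AMinPre

variable {X : Type*} [LinearOrder X] [TopologicalSpace X] [OrderTopology X] [CompactSpace X]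
  [Nonempty X]

lemma exists_lub (s : Set X) (hs : s.Nonempty) : ∃ x, IsLUB s x := by
  obtain ⟨x, -, hx⟩ := (isClosed_closure (s := s)).isCompact.exists_isLUB hs.closure
  refine ⟨x, ?_, ?_⟩
  · have := hx.1
    rwa [upperBounds_closure] at this
  · intro y hy
    exact hx.2 (by rwa [upperBounds_closure])

lemma exists_glb (s : Set X) (hs : s.Nonempty) : ∃ x, IsGLB s x := by
  obtain ⟨x, -, hx⟩ := (isClosed_closure (s := s)).isCompact.exists_isGLB hs.closure
  refine ⟨x, ?_, ?_⟩
  · have := hx.1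
    rwa [lowerBounds_closure] at this
  · intro y hy
    exact hx.2 (by rwa [lowerBounds_closure])

lemma bddAbove_all (s : Set X) : BddAbove s := by
  obtain ⟨b, -, hb⟩ := (isCompact_univ (X := X)).exists_isGreatest Set.univ_nonempty
  exact ⟨b, fun x _ => hb trivial⟩

lemma bddBelow_all (s : Set X) : BddBelow s := by
  obtain ⟨b, -, hb⟩ := (isCompact_univ (X := X)).exists_isLeast Set.univ_nonempty
  exact ⟨b, fun x _ => hb trivial⟩

end AMinPre

/-- Let `X` be a compact connected LOTS such that every pair `a < b` admits `a ≤ c < d ≤ b`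
with `[c,d]` separable.  Then both the group `H₊(X)` of order-preserving homeomorphisms
(realized as the subgroup with carrier the monotone homeomorphisms, with the subspace
compact-open topology) and the full homeomorphism group `H(X)` (with the compact-open
topology) are `a`-minimal: their topologies are the smallest Hausdorff group topologies,
i.e. every Hausdorff group topology on them is finer. -/
theorem orderHomeo_and_homeo_aMinimal_of_separable {X : Type*} [LinearOrder X]
    [TopologicalSpace X] [OrderTopology X] [CompactSpace X] [ConnectedSpace X]
    (hC : ∀ a b : X, a < b → ∃ c d : X, a ≤ c ∧ c < d ∧ d ≤ b ∧
      TopologicalSpace.SeparableSpace (Set.Icc c d))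
    (H : Subgroup (X ≃ₜ X)) (hH : H.carrier = {f : X ≃ₜ X | Monotone ⇑f}) :
    (∀ t : TopologicalSpace ↥H, @T2Space ↥H t → @IsTopologicalGroup ↥H t _ →
      t ≤ (instTopologicalSpaceSubtype : TopologicalSpace ↥H)) ∧
    (∀ t : TopologicalSpace (X ≃ₜ X), @T2Space (X ≃ₜ X) t → @IsTopologicalGroup (X ≃ₜ X) t _ →
      t ≤ homeoCompactOpen) := by
  classical
  haveI : Nonempty X := inferInstance
  letI supSet : SupSet X := ⟨fun s => if h : s.Nonempty then (AMinPre.exists_lub s h).choose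
    else Classical.choice ‹Nonempty X›⟩
  letI lat : Lattice X := inferInstance
  letI cclat : ConditionallyCompleteLattice X :=
    conditionallyCompleteLatticeOfLatticeOfsSup X (fun s _ hne => by
      have h1 : sSup s = (AMinPre.exists_lub s hne).choose := dif_pos hne
      rw [h1]
      exact (AMinPre.exists_lub s hne).choose_spec)
  letI ccl : ConditionallyCompleteLinearOrder X :=
    { cclat, ‹LinearOrder X› with
      csSup_of_not_bddAbove := fun s hs => absurd (AMinPre.bddAbove_all s) hs
      csInf_of_not_bddBelow := fun s hs => absurd (AMinPre.bddBelow_all s) hs }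
  have hC' : AMinMaster.SepHyp X := hC
  constructor
  · -- the subgroup of monotone homeomorphisms
    intro t ht2 htg
    have hTeq : (instTopologicalSpaceSubtype : TopologicalSpace ↥H) =
        TopologicalSpace.generateFrom
          ((Set.preimage fun f : ↥H => ((f : X ≃ₜ X) : C(X, X))) ''
            Set.image2 (fun K U => {φ : C(X, X) | Set.MapsTo ⇑φ K U})
              {K : Set X | IsCompact K} {U : Set X | IsOpen U}) := by
      show TopologicalSpace.induced _ (TopologicalSpace.induced _ ContinuousMap.compactOpen) = _
      rw [ContinuousMap.compactOpen_eq, induced_compose, induced_generateFrom_eq]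
      rfl
    rw [hTeq]
    apply le_generateFrom
    rintro _ ⟨_, ⟨K, hK, U, hU, rfl⟩, rfl⟩
    have hset : ((Set.preimage fun f : ↥H => ((f : X ≃ₜ X) : C(X, X)))
        {φ : C(X, X) | Set.MapsTo ⇑φ K U}) =
        {g : ↥H | ∀ x ∈ K, (H.subtype) g x ∈ U} := by
      ext f
      simp [Set.MapsTo]
    rw [hset]
    exact @AMinMaster.master X ccl ‹TopologicalSpace X› ‹OrderTopology X› ‹CompactSpace X›
      ‹ConnectedSpace X› ↥H _ t ht2 htg H.subtype H.subtype_injective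
      (fun σ hσ => ⟨⟨σ, by rw [← Subgroup.mem_carrier, hH]; exact hσ⟩, rfl⟩)
      hC' K U (show IsCompact K from hK) (show IsOpen U from hU)
  · -- the full homeomorphism group
    intro t ht2 htg
    have hTeq : (homeoCompactOpen : TopologicalSpace (X ≃ₜ X)) =
        TopologicalSpace.generateFrom
          ((Set.preimage fun f : X ≃ₜ X => (f : C(X, X))) ''
            Set.image2 (fun K U => {φ : C(X, X) | Set.MapsTo ⇑φ K U})
              {K : Set X | IsCompact K} {U : Set X | IsOpen U}) := by
      show TopologicalSpace.induced _ ContinuousMap.compactOpen = _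
      rw [ContinuousMap.compactOpen_eq, induced_generateFrom_eq]
    rw [hTeq]
    apply le_generateFrom
    rintro _ ⟨_, ⟨K, hK, U, hU, rfl⟩, rfl⟩
    have hset : ((Set.preimage fun f : X ≃ₜ X => (f : C(X, X)))
        {φ : C(X, X) | Set.MapsTo ⇑φ K U}) =
        {g : X ≃ₜ X | ∀ x ∈ K, (MonoidHom.id (X ≃ₜ X)) g x ∈ U} := by
      ext f
      simp [Set.MapsTo]
    rw [hset]
    exact @AMinMaster.master X ccl ‹TopologicalSpace X› ‹OrderTopology X› ‹CompactSpace X›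
      ‹ConnectedSpace X› (X ≃ₜ X) _ t ht2 htg (MonoidHom.id _) Function.injective_id
      (fun σ _ => ⟨σ, rfl⟩) hC' K U (show IsCompact K from hK) (show IsOpen U from hU)
end

section
/- Every separable compact connected linearly ordered topological space with at least two points is homeomorphic to the real unit interval [0,1]. -/
open Set TopologicalSpace

lemma aux_denselyOrdered {X : Type*} [LinearOrder X] [TopologicalSpace X] [OrderTopology X]
    [PreconnectedSpace X] : DenselyOrdered X := by
  constructor
  intro a b hab
  by_contra h
  push_neg at h
  have h1 : Iic a = Iio b := by
    ext x
    constructor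
    · exact fun hx => lt_of_le_of_lt hx hab
    · intro hx
      by_contra hx2
      exact absurd hx (not_lt.2 (h x (not_le.1 hx2)))
  have hco : IsClopen (Iic a) := ⟨isClosed_Iic, h1 ▸ isOpen_Iio⟩
  rcases isClopen_iff.1 hco with he | hu
  · exact absurd he (Nonempty.ne_empty ⟨a, self_mem_Iic⟩)
  · have : b ∈ Iic a := hu.symm ▸ mem_univ b
    exact absurd this (not_le.2 hab)

/-- Every separable compact connected linearly ordered topological space with at least two
points is homeomorphic to the real unit interval `[0,1]`. -/
theorem separable_ordered_continuum_homeomorph_unitInterval {X : Type*} [LinearOrder X]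
    [TopologicalSpace X] [OrderTopology X] [CompactSpace X] [ConnectedSpace X]
    [TopologicalSpace.SeparableSpace X] [Nontrivial X] :
    Nonempty (X ≃ₜ Set.Icc (0 : ℝ) 1) := by
  haveI := aux_denselyOrdered (X := X)
  obtain ⟨bot, hbot⟩ := isCompact_univ.exists_isLeast (univ_nonempty (α := X))
  obtain ⟨top, htop⟩ := isCompact_univ.exists_isGreatest (univ_nonempty (α := X))
  have hbot' : ∀ x : X, bot ≤ x := fun x => hbot.2 (mem_univ x)
  have htop' : ∀ x : X, x ≤ top := fun x => htop.2 (mem_univ x)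
  have hbt : bot < top := by
    obtain ⟨x, y, hxy⟩ := exists_pair_ne X
    rcases hxy.lt_or_gt with h | h
    · exact (hbot' x).trans_lt (h.trans_le (htop' y))
    · exact (hbot' y).trans_lt (h.trans_le (htop' x))
  obtain ⟨s, hsc, hsd⟩ := TopologicalSpace.exists_countable_dense X
  set D : Set X := s ∩ Ioo bot top with hD
  have key : ∀ a b : X, a < b → ∃ d ∈ D, a < d ∧ d < b := by
    intro a b hab
    obtain ⟨d, hds, hd⟩ := hsd.exists_mem_open isOpen_Ioo (nonempty_Ioo.2 hab)
    exact ⟨d, ⟨hds, (hbot' a).trans_lt hd.1, hd.2.trans_le (htop' b)⟩, hd.1, hd.2⟩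
  haveI : Countable ↥D := (hsc.mono inter_subset_left).to_subtype
  haveI : Nonempty ↥D := by
    obtain ⟨d, hd, -⟩ := key bot top hbt
    exact ⟨⟨d, hd⟩⟩
  haveI : DenselyOrdered ↥D := by
    constructor
    rintro ⟨a, ha⟩ ⟨b, hb⟩ hab
    obtain ⟨d, hd, h1, h2⟩ := key a b hab
    exact ⟨⟨d, hd⟩, h1, h2⟩
  haveI : NoMinOrder ↥D := by
    constructor
    rintro ⟨a, ha⟩
    obtain ⟨d, hd, h1, h2⟩ := key bot a ha.2.1
    exact ⟨⟨d, hd⟩, h2⟩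
  haveI : NoMaxOrder ↥D := by
    constructor
    rintro ⟨a, ha⟩
    obtain ⟨d, hd, h1, h2⟩ := key a top ha.2.2
    exact ⟨⟨d, hd⟩, h1⟩
  haveI : Nonempty ↥(Ioo (0:ℚ) 1) := Set.nonempty_Ioo_subtype (by norm_num)
  obtain ⟨f⟩ := Order.iso_of_countable_dense (↥D) (↥(Ioo (0:ℚ) 1))
  set F : ↥D → ℝ := fun d => ((f d : ℚ) : ℝ) with hF
  have hF0 : ∀ d, 0 < F d := fun d => by
    simp only [hF]; exact_mod_cast (f d).2.1
  have hF1 : ∀ d, F d < 1 := fun d => by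
    simp only [hF]; exact_mod_cast (f d).2.2
  have hFmono : StrictMono F := by
    intro a b h
    have : f a < f b := f.strictMono h
    simp only [hF]
    exact_mod_cast this
  -- for any q ∈ (0,1) ∩ ℚ there is d with F d = q
  have hFsurj : ∀ q : ℚ, 0 < q → q < 1 → ∃ d : ↥D, F d = (q : ℝ) := by
    intro q h0 h1
    refine ⟨f.symm ⟨q, h0, h1⟩, ?_⟩
    simp [hF]
  set g : X → ℝ := fun x => sSup (F '' {d : ↥D | (d : X) ≤ x}) with hg
  have hbdd : ∀ x : X, ∀ y ∈ F '' {d : ↥D | (d : X) ≤ x}, y ≤ 1 := by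
    rintro x y ⟨d, -, rfl⟩
    exact (hF1 d).le
  have hBdd : ∀ x : X, BddAbove (F '' {d : ↥D | (d : X) ≤ x}) := fun x => ⟨1, hbdd x⟩
  have hg1 : ∀ x, g x ≤ 1 := fun x => Real.sSup_le (hbdd x) (by norm_num)
  have hg0 : ∀ x, 0 ≤ g x := by
    intro x
    rcases (F '' {d : ↥D | (d : X) ≤ x}).eq_empty_or_nonempty with he | ⟨y, hy⟩
    · simp [hg, he]
    · obtain ⟨d, hdx, rfl⟩ := hy
      exact (hF0 d).le.trans (le_csSup (hBdd x) ⟨d, hdx, rfl⟩)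
  have hgmono : StrictMono g := by
    intro x y hxy
    obtain ⟨d1, hd1, hx1, h1y⟩ := key x y hxy
    obtain ⟨d2, hd2, h12, h2y⟩ := key d1 y h1y
    have hA : g x ≤ F ⟨d1, hd1⟩ := by
      refine Real.sSup_le ?_ (hF0 _).le
      rintro z ⟨d, hdx, rfl⟩
      exact (hFmono (show d < (⟨d1, hd1⟩ : ↥D) from Subtype.coe_lt_coe.1 (lt_of_le_of_lt hdx hx1))).le
    have hB : F ⟨d2, hd2⟩ ≤ g y :=
      le_csSup (hBdd y) ⟨⟨d2, hd2⟩, h2y.le, rfl⟩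
    exact hA.trans_lt ((hFmono (show (⟨d1, hd1⟩ : ↥D) < ⟨d2, hd2⟩ from Subtype.coe_lt_coe.1 h12)).trans_le hB)
  have hgbot : g bot = 0 := by
    have : {d : ↥D | (d : X) ≤ bot} = ∅ := by
      ext d
      simp only [mem_setOf_eq, mem_empty_iff_false, iff_false, not_le]
      exact d.2.2.1
    simp [hg, this]
  have hgsurj : ∀ r : ℝ, 0 ≤ r → r ≤ 1 → ∃ x : X, g x = r := by
    intro r hr0 hr1
    rcases eq_or_lt_of_le hr0 with rfl | hr0
    · exact ⟨bot, hgbot⟩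
    -- r > 0 case
    set A : Set X := (fun d : ↥D => (d : X)) '' {d : ↥D | F d ≤ r} with hA
    have hAne : A.Nonempty := by
      obtain ⟨q, hq1, hq2⟩ := exists_rat_btwn (lt_min hr0 one_pos)
      obtain ⟨d, hd⟩ := hFsurj q (by exact_mod_cast hq1)
        (by exact_mod_cast hq2.trans_le (min_le_right r 1))
      exact ⟨d, ⟨d, by rw [mem_setOf_eq, hd]; exact (hq2.trans_le (min_le_left r 1)).le, rfl⟩⟩
    obtain ⟨x, -, hxlub'⟩ := (isClosed_closure.isCompact).exists_isLUB hAne.closure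
    have hxlub : IsLUB A x := by
      rw [IsLUB] at hxlub' ⊢
      rwa [upperBounds_closure] at hxlub'
    refine ⟨x, le_antisymm ?_ ?_⟩
    · refine Real.sSup_le ?_ hr0.le
      rintro z ⟨d, hdx, rfl⟩
      by_contra hcon
      push_neg at hcon
      have hub : (d : X) ∈ upperBounds A := by
        rintro a ⟨e, he, rfl⟩
        exact (hFmono.lt_iff_lt.1 (lt_of_le_of_lt he hcon)).le
      have hdx' : (d : X) = x := le_antisymm hdx (hxlub.2 hub)
      obtain ⟨q, hq1, hq2⟩ := exists_rat_btwn hcon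
      obtain ⟨e, he⟩ := hFsurj q (by exact_mod_cast hr0.trans hq1)
        (by exact_mod_cast hq2.trans (hF1 d))
      have hed : e < d := hFmono.lt_iff_lt.1 (by rw [he]; exact hq2)
      have hub2 : (e : X) ∈ upperBounds A := by
        rintro a ⟨c, hc, rfl⟩
        have : F c < F e := by rw [he]; exact lt_of_le_of_lt hc hq1
        exact (hFmono.lt_iff_lt.1 this).le
      have : x ≤ (e : X) := hxlub.2 hub2
      rw [← hdx'] at this
      exact absurd this (not_le.2 hed)
    · by_contra hcon
      push_neg at hcon
      obtain ⟨q, hq1, hq2⟩ := exists_rat_btwn hcon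
      obtain ⟨d, hd⟩ := hFsurj q (by exact_mod_cast (hg0 x).trans_lt hq1)
        (by exact_mod_cast hq2.trans_le hr1)
      have hdA : (d : X) ∈ A := ⟨d, by rw [mem_setOf_eq, hd]; exact hq2.le, rfl⟩
      have hdx : (d : X) ≤ x := hxlub.1 hdA
      have : F d ≤ g x := le_csSup (hBdd x) ⟨d, hdx, rfl⟩
      rw [hd] at this
      exact absurd this (not_le.2 hq1)
  let g' : X → ↥(Set.Icc (0:ℝ) 1) := fun x => ⟨g x, hg0 x, hg1 x⟩
  have hg'mono : StrictMono g' := fun a b h => Subtype.mk_lt_mk.2 (hgmono h)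
  have hg'surj : Function.Surjective g' := by
    rintro ⟨r, hr0, hr1⟩
    obtain ⟨x, hx⟩ := hgsurj r hr0 hr1
    exact ⟨x, Subtype.ext hx⟩
  exact ⟨(StrictMono.orderIsoOfSurjective g' hg'mono hg'surj).toHomeomorph⟩
end
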